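/- arXiv:2406.01435 — 6 statements merged into one kernel-verified Lean document; each statement's English description precedes it below -/
import Mathlib

section
/- Let F and N be positive integers, let Φ and Ψ be real F×N matrices, let Y ∈ ℝ^N, and let λ > 0. Suppose the N×N matrix ΦᵀΨ + λI_N is invertible (equivalently, its transpose ΨᵀΦ + λI_N is invertible). Then the pair w* = Ψ(ΦᵀΨ + λI_N)⁻¹Y, v* = Φ(ΨᵀΦ + λI_N)⁻¹Y is a stationary point of the asymmetric kernel ridge regression objective, i.e. it satisfies the two stationarity equations λ v* + Φ(Ψᵀ v* − Y) = 0 and λ w* + Ψ(Φᵀ w* − Y) = 0. -/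
open Matrix

lemma aux_KRR (F N : ℕ) (M P : Matrix (Fin F) (Fin N) ℝ) (Y : Fin N → ℝ) (lam : ℝ)
    (h : (Pᵀ * M + lam • (1 : Matrix (Fin N) (Fin N) ℝ)) *
        (Pᵀ * M + lam • (1 : Matrix (Fin N) (Fin N) ℝ))⁻¹ = 1) :
    lam • (M *ᵥ ((Pᵀ * M + lam • (1 : Matrix (Fin N) (Fin N) ℝ))⁻¹ *ᵥ Y)) +
        M *ᵥ (Pᵀ *ᵥ (M *ᵥ ((Pᵀ * M + lam • (1 : Matrix (Fin N) (Fin N) ℝ))⁻¹ *ᵥ Y)) - Y)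
      = 0 := by
  set B := Pᵀ * M + lam • (1 : Matrix (Fin N) (Fin N) ℝ) with hB
  set x := B⁻¹ *ᵥ Y with hx
  have hBx : B *ᵥ x = Y := by
    rw [hx, mulVec_mulVec, h, one_mulVec]
  have key : lam • x + (Pᵀ *ᵥ (M *ᵥ x) - Y) = 0 := by
    have : B *ᵥ x = Pᵀ *ᵥ (M *ᵥ x) + lam • x := by
      rw [hB, add_mulVec, smul_mulVec, one_mulVec, mulVec_mulVec]
      simp [hx, mulVec_mulVec, Matrix.mul_assoc]
    rw [this] at hBx
    rw [← hBx]; abel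
  calc lam • (M *ᵥ x) + M *ᵥ (Pᵀ *ᵥ (M *ᵥ x) - Y)
      = M *ᵥ (lam • x + (Pᵀ *ᵥ (M *ᵥ x) - Y)) := by
        rw [mulVec_add, mulVec_smul]
    _ = 0 := by rw [key, mulVec_zero]

/-- For real `F × N` matrices `Φ`, `Ψ`, a vector `Y ∈ ℝ^N` and `λ > 0`,
if `ΦᵀΨ + λ I_N` is invertible, then the pair
`w* = Ψ (ΦᵀΨ + λI)⁻¹ Y`, `v* = Φ (ΨᵀΦ + λI)⁻¹ Y` satisfies the stationarity equations
`λ v* + Φ (Ψᵀ v* − Y) = 0` and `λ w* + Ψ (Φᵀ w* − Y) = 0` of the asymmetric kernel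
ridge regression objective. -/
theorem asymmetric_KRR_stationary_point
    (F N : ℕ) (hF : 0 < F) (hN : 0 < N)
    (Φ Ψ : Matrix (Fin F) (Fin N) ℝ) (Y : Fin N → ℝ) (lam : ℝ) (hlam : 0 < lam)
    (hinv : IsUnit (Φᵀ * Ψ + lam • (1 : Matrix (Fin N) (Fin N) ℝ))) :
    lam • (Φ *ᵥ ((Ψᵀ * Φ + lam • (1 : Matrix (Fin N) (Fin N) ℝ))⁻¹ *ᵥ Y)) +
        Φ *ᵥ (Ψᵀ *ᵥ (Φ *ᵥ ((Ψᵀ * Φ + lam • (1 : Matrix (Fin N) (Fin N) ℝ))⁻¹ *ᵥ Y)) - Y)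
      = 0 ∧
    lam • (Ψ *ᵥ ((Φᵀ * Ψ + lam • (1 : Matrix (Fin N) (Fin N) ℝ))⁻¹ *ᵥ Y)) +
        Ψ *ᵥ (Φᵀ *ᵥ (Ψ *ᵥ ((Φᵀ * Ψ + lam • (1 : Matrix (Fin N) (Fin N) ℝ))⁻¹ *ᵥ Y)) - Y)
      = 0 := by
  have hdetA : IsUnit (Φᵀ * Ψ + lam • (1 : Matrix (Fin N) (Fin N) ℝ)).det :=
    (Matrix.isUnit_iff_isUnit_det _).mp hinv
  have hBT : (Ψᵀ * Φ + lam • (1 : Matrix (Fin N) (Fin N) ℝ))ᵀ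
      = Φᵀ * Ψ + lam • (1 : Matrix (Fin N) (Fin N) ℝ) := by
    simp [transpose_add, transpose_mul, transpose_smul]
  have hdetB : IsUnit (Ψᵀ * Φ + lam • (1 : Matrix (Fin N) (Fin N) ℝ)).det := by
    rw [← Matrix.det_transpose, hBT]; exact hdetA
  constructor
  · exact aux_KRR F N Φ Ψ Y lam (Matrix.mul_nonsing_inv _ hdetB)
  · exact aux_KRR F N Ψ Φ Y lam (Matrix.mul_nonsing_inv _ hdetA)
end

section
/- Let F and N be positive integers, let Φ and Ψ be real F×N matrices, let Y ∈ ℝ^N, and let λ > 0. Suppose λI_N + ΦᵀΨ is invertible (equivalently, λI_N + ΨᵀΦ is invertible). Define α* = λ(λI_N + ΦᵀΨ)⁻¹Y, β* = λ(λI_N + ΨᵀΦ)⁻¹Y, w* = (1/λ)Ψα*, v* = (1/λ)Φβ*, e* = α*, and r* = β*. Then (w*, v*, e*, r*, α*, β*) satisfies the KKT (stationarity and feasibility) system of the constrained asymmetric kernel ridge regression problem, namely: λw* = Ψα*, λv* = Φβ*, e* = α*, r* = β*, e* = Y − Φᵀw*, and r* = Y − Ψᵀv*. -/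
open Matrix

lemma kkt_aux {N : ℕ} (A : Matrix (Fin N) (Fin N) ℝ) (M : Matrix (Fin N) (Fin N) ℝ)
    (Y : Fin N → ℝ) (lam : ℝ) (hlam : lam ≠ 0)
    (hA : A = lam • (1 : Matrix (Fin N) (Fin N) ℝ) + M)
    (hu : IsUnit A) :
    lam • (A⁻¹ *ᵥ Y) = Y - (1 / lam) • (M *ᵥ (lam • (A⁻¹ *ᵥ Y))) := by
  have hAinv : A * A⁻¹ = 1 := Matrix.mul_nonsing_inv _ ((Matrix.isUnit_iff_isUnit_det _).mp hu)
  set α : Fin N → ℝ := lam • (A⁻¹ *ᵥ Y) with hα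
  have hAα : A *ᵥ α = lam • Y := by
    rw [hα, Matrix.mulVec_smul, Matrix.mulVec_mulVec, hAinv, Matrix.one_mulVec]
  have hM : M = A - lam • (1 : Matrix (Fin N) (Fin N) ℝ) := by rw [hA]; abel
  have hMα : M *ᵥ α = lam • Y - lam • α := by
    rw [hM, Matrix.sub_mulVec, hAα, Matrix.smul_mulVec, Matrix.one_mulVec]
  rw [hMα, smul_sub, smul_smul, smul_smul, one_div, inv_mul_cancel₀ hlam, one_smul, one_smul]
  abel

/-- For real `F × N` matrices `Φ`, `Ψ`, `Y ∈ ℝ^N` and `λ > 0` with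
`λ I_N + ΦᵀΨ` invertible, the tuple
`α* = λ (λI + ΦᵀΨ)⁻¹ Y`, `β* = λ (λI + ΨᵀΦ)⁻¹ Y`, `w* = (1/λ) Ψ α*`,
`v* = (1/λ) Φ β*`, `e* = α*`, `r* = β*` satisfies the KKT system of the constrained
asymmetric kernel ridge regression problem: `λ w* = Ψ α*`, `λ v* = Φ β*`, `e* = α*`,
`r* = β*`, `e* = Y − Φᵀ w*`, `r* = Y − Ψᵀ v*`. -/
theorem asymmetric_KRR_KKT_point
    (F N : ℕ) (hF : 0 < F) (hN : 0 < N)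
    (Φ Ψ : Matrix (Fin F) (Fin N) ℝ) (Y : Fin N → ℝ) (lam : ℝ) (hlam : 0 < lam)
    (hinv : IsUnit (lam • (1 : Matrix (Fin N) (Fin N) ℝ) + Φᵀ * Ψ))
    (α β : Fin N → ℝ) (w v : Fin F → ℝ) (e r : Fin N → ℝ)
    (hα : α = lam • ((lam • (1 : Matrix (Fin N) (Fin N) ℝ) + Φᵀ * Ψ)⁻¹ *ᵥ Y))
    (hβ : β = lam • ((lam • (1 : Matrix (Fin N) (Fin N) ℝ) + Ψᵀ * Φ)⁻¹ *ᵥ Y))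
    (hw : w = (1 / lam) • (Ψ *ᵥ α))
    (hv : v = (1 / lam) • (Φ *ᵥ β))
    (he : e = α) (hr : r = β) :
    lam • w = Ψ *ᵥ α ∧
    lam • v = Φ *ᵥ β ∧
    e = α ∧
    r = β ∧
    e = Y - Φᵀ *ᵥ w ∧
    r = Y - Ψᵀ *ᵥ v := by
  have hlam0 : lam ≠ 0 := ne_of_gt hlam
  have hAT : (lam • (1 : Matrix (Fin N) (Fin N) ℝ) + Φᵀ * Ψ)ᵀ
      = lam • (1 : Matrix (Fin N) (Fin N) ℝ) + Ψᵀ * Φ := by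
    simp [Matrix.transpose_add, Matrix.transpose_smul, Matrix.transpose_mul]
  have hinvT : IsUnit (lam • (1 : Matrix (Fin N) (Fin N) ℝ) + Ψᵀ * Φ) := by
    rw [← hAT]
    rw [Matrix.isUnit_iff_isUnit_det, Matrix.det_transpose,
      ← Matrix.isUnit_iff_isUnit_det]
    exact hinv
  refine ⟨?_, ?_, he, hr, ?_, ?_⟩
  · rw [hw, smul_smul, mul_one_div, div_self hlam0, one_smul]
  · rw [hv, smul_smul, mul_one_div, div_self hlam0, one_smul]
  · rw [he, hw, hα, Matrix.mulVec_smul, Matrix.mulVec_mulVec]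
    exact kkt_aux _ _ Y lam hlam0 rfl hinv
  · rw [hr, hv, hβ, Matrix.mulVec_smul, Matrix.mulVec_mulVec]
    exact kkt_aux _ _ Y lam hlam0 rfl hinvT
end

section
/- Let d, N be positive integers, x_1,…,x_N ∈ ℝ^d, σ* > 0, and let K be the N×N matrix with entries K_{ij} = exp(−σ*‖x_i − x_j‖²). Let y ∈ ℝ^N, q ∈ (0,1), γ > 0, and let κ > 0 be a constant with |K_{ij}| ≤ κ for all i, j (for the Gaussian kernel matrix this holds for any κ ≥ 1). If α* ∈ ℝ^N is a global minimizer of the ℓ_q-regularized kernel regression objective Φ_q(α) = (1/N) Σ_{i=1}^N ((Kα)_i − y_i)² + γ Σ_{j=1}^N |α_j|^q, then every nonzero coordinate of α* satisfies |α*_i| ≥ ((1−q)/κ²)^{1/(2−q)} γ^{1/(2−q)}. -/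
open Matrix Finset

/-- If `f 1 = 0`, `f` is nonnegative on `(1, ∞)` and `f` has derivative `D` at `1`,
then `D ≥ 0`. -/
lemma deriv_nonneg_of_right_nonneg {f : ℝ → ℝ} {D : ℝ}
    (hf : HasDerivAt f D 1) (h0 : f 1 = 0) (hpos : ∀ t, 1 < t → 0 ≤ f t) :
    0 ≤ D := by
  rw [hasDerivAt_iff_tendsto_slope] at hf
  have hsub : Set.Ioi (1 : ℝ) ⊆ {(1 : ℝ)}ᶜ := fun t ht => ne_of_gt ht
  have hf' : Filter.Tendsto (slope f 1) (nhdsWithin 1 (Set.Ioi 1)) (nhds D) :=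
    hf.mono_left (nhdsWithin_mono _ hsub)
  refine ge_of_tendsto hf' ?_
  filter_upwards [self_mem_nhdsWithin] with t ht
  have ht1 : (1 : ℝ) < t := ht
  have : slope f 1 t = (f t - f 1) / (t - 1) := by
    rw [slope_def_field]
  rw [this, h0, sub_zero]
  exact div_nonneg (hpos t ht1) (by linarith)

/-- Any nonzero coordinate of a global minimizer of the
`ℓ_q`-regularized Gaussian kernel regression objective (`0 < q < 1`) has absolute
value at least `((1−q)/κ²)^{1/(2−q)} γ^{1/(2−q)}`, where `κ` bounds the kernel
matrix entries. -/
theorem lq_minimizer_nonzero_coordinate_lower_bound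
    (d N : ℕ) (hd : 0 < d) (hN : 0 < N)
    (x : Fin N → EuclideanSpace ℝ (Fin d)) (σ : ℝ) (hσ : 0 < σ)
    (K : Matrix (Fin N) (Fin N) ℝ)
    (hK : ∀ i j, K i j = Real.exp (-σ * ‖x i - x j‖ ^ 2))
    (y : Fin N → ℝ) (q : ℝ) (hq0 : 0 < q) (hq1 : q < 1)
    (γ : ℝ) (hγ : 0 < γ) (κ : ℝ) (hκ : 0 < κ)
    (hKκ : ∀ i j, |K i j| ≤ κ)
    (αs : Fin N → ℝ)
    (hmin : ∀ α : Fin N → ℝ,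
      (1 / N : ℝ) * ∑ i, ((K *ᵥ αs) i - y i) ^ 2 + γ * ∑ j, |αs j| ^ q ≤
        (1 / N : ℝ) * ∑ i, ((K *ᵥ α) i - y i) ^ 2 + γ * ∑ j, |α j| ^ q) :
    ∀ i, αs i ≠ 0 →
      ((1 - q) / κ ^ 2) ^ ((1 : ℝ) / (2 - q)) * γ ^ ((1 : ℝ) / (2 - q)) ≤ |αs i| := by
  intro i hi
  set s : ℝ := αs i with hs
  set c : Fin N → ℝ := fun j => (K *ᵥ αs) j - y j with hc
  set k : Fin N → ℝ := fun j => K j i with hk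
  set A : ℝ := ∑ j, (k j) ^ 2 with hA
  set Bv : ℝ := ∑ j, c j * k j with hBv
  have hNpos : (0 : ℝ) < (N : ℝ) := by exact_mod_cast hN
  -- Key inequality from minimality along the i-th coordinate
  have key : ∀ t : ℝ, 0 ≤ (1 / N : ℝ) * (2 * (t - s) * Bv + (t - s) ^ 2 * A)
      + γ * (|t| ^ q - |s| ^ q) := by
    intro t
    have hmv : ∀ j, (K *ᵥ Function.update αs i t) j = (K *ᵥ αs) j + k j * (t - s) := by
      intro j
      have hupd : Function.update αs i t = fun l => αs l + if l = i then t - s else 0 := by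
        funext l
        by_cases hl : l = i
        · subst hl; simp [hs]
        · simp [Function.update_of_ne hl, hl]
      simp only [Matrix.mulVec, dotProduct, hupd]
      rw [show (∑ l, K j l * (αs l + if l = i then t - s else 0))
          = (∑ l, K j l * αs l) + ∑ l, (if l = i then K j l * (t - s) else 0) by
        rw [← Finset.sum_add_distrib]; congr 1; funext l; by_cases hl : l = i <;> simp [hl] <;> ring]
      rw [Finset.sum_ite_eq' Finset.univ i (fun l => K j l * (t - s))]
      simp [hk]
    have hreg : ∀ (v : Fin N → ℝ), ∑ j, |Function.update v i t j| ^ q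
        = |t| ^ q + ∑ j ∈ (Finset.univ \ {i}), |v j| ^ q := by
      intro v
      have : (fun j => |Function.update v i t j| ^ q)
          = Function.update (fun j => |v j| ^ q) i (|t| ^ q) := by
        funext j
        exact Function.apply_update (fun _ z => |z| ^ q) v i t j
      rw [this, Finset.sum_update_of_mem (Finset.mem_univ i)]
    have hreg0 : ∑ j, |αs j| ^ q = |s| ^ q + ∑ j ∈ (Finset.univ \ {i}), |αs j| ^ q := by
      rw [Finset.sum_eq_sum_sdiff_singleton_add (Finset.mem_univ i) (fun j => |αs j| ^ q),
        add_comm]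
    have hm := hmin (Function.update αs i t)
    have hsq : ∑ j, ((K *ᵥ Function.update αs i t) j - y j) ^ 2
        = (∑ j, (c j) ^ 2) + (2 * (t - s) * Bv + (t - s) ^ 2 * A) := by
      have : ∀ j, ((K *ᵥ Function.update αs i t) j - y j) ^ 2
          = (c j) ^ 2 + (2 * (t - s) * (c j * k j) + (t - s) ^ 2 * (k j) ^ 2) := by
        intro j; rw [hmv j]; simp only [hc]; ring
      rw [Finset.sum_congr rfl (fun j _ => this j), Finset.sum_add_distrib,
        Finset.sum_add_distrib, ← Finset.mul_sum, ← Finset.mul_sum, hBv, hA]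
    rw [hsq, hreg αs, hreg0] at hm
    have hc2 : ∑ j, ((K *ᵥ αs) j - y j) ^ 2 = ∑ j, (c j) ^ 2 := rfl
    rw [hc2] at hm
    nlinarith [hm]
  have hsabs : 0 < |s| := abs_pos.mpr hi
  have hsQ : (0 : ℝ) < |s| ^ q := Real.rpow_pos_of_pos hsabs q
  -- from t = 0
  have key0 : 0 ≤ (1 / N : ℝ) * (2 * (0 - s) * Bv + s ^ 2 * A) - γ * |s| ^ q := by
    have := key 0
    rw [abs_zero, Real.zero_rpow (ne_of_gt hq0)] at this
    nlinarith [this]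
  -- the function f and its nonnegativity on (1, ∞)
  set C1 : ℝ := (1 / N : ℝ) * A * s ^ 2 with hC1
  set C2 : ℝ := γ * |s| ^ q with hC2
  set f : ℝ → ℝ := fun lam => C1 * (lam ^ 2 - lam) - C2 * lam + C2 * lam ^ q with hf
  have hfpos : ∀ lam, 1 < lam → 0 ≤ f lam := by
    intro lam hlam
    have hlam0 : (0 : ℝ) < lam := by linarith
    have hkey := key (lam * s)
    have habs : |lam * s| ^ q = lam ^ q * |s| ^ q := by
      rw [abs_mul, abs_of_pos hlam0, Real.mul_rpow (le_of_lt hlam0) (abs_nonneg s)]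
    rw [habs] at hkey
    have hts : lam * s - s = (lam - 1) * s := by ring
    rw [hts] at hkey
    -- (lam - 1) * key0 + hkey  gives the result
    have h1 : (0:ℝ) ≤ lam - 1 := by linarith
    simp only [hf, hC1, hC2]
    nlinarith [key0, hkey, mul_nonneg h1 key0]
  -- derivative of f at 1
  have hrpow : HasDerivAt (fun lam : ℝ => lam ^ q) q 1 := by
    have := Real.hasDerivAt_rpow_const (x := (1:ℝ)) (p := q) (Or.inl one_ne_zero)
    simpa [Real.one_rpow] using this
  have hpoly : HasDerivAt (fun lam : ℝ => lam ^ 2 - lam) 1 1 := by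
    have h1 : HasDerivAt (fun lam : ℝ => lam ^ 2) 2 1 := by
      simpa using hasDerivAt_pow 2 (1:ℝ)
    have h2 := h1.sub (hasDerivAt_id 1)
    norm_num at h2
    exact h2
  have hfD : HasDerivAt f (C1 * 1 - C2 * 1 + C2 * q) 1 := by
    exact ((hpoly.const_mul C1).sub ((hasDerivAt_id 1).const_mul C2)).add (hrpow.const_mul C2)
  have hf1 : f 1 = 0 := by
    simp [hf, Real.one_rpow]
  have hD : 0 ≤ C1 * 1 - C2 * 1 + C2 * q := deriv_nonneg_of_right_nonneg hfD hf1 hfpos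
  -- so C2 * (1 - q) ≤ C1, i.e. γ * (1-q) * |s|^q ≤ (1/N) * A * s^2
  have hmain : γ * (1 - q) * |s| ^ q ≤ (1 / N : ℝ) * A * s ^ 2 := by
    simp only [hC1, hC2] at hD ⊢
    nlinarith [hD]
  -- A / N ≤ κ^2
  have hAbound : (1 / N : ℝ) * A ≤ κ ^ 2 := by
    have hA' : A ≤ (N : ℝ) * κ ^ 2 := by
      rw [hA]
      calc ∑ j, (k j) ^ 2 ≤ ∑ _j : Fin N, κ ^ 2 := by
            apply Finset.sum_le_sum
            intro j _
            have := hKκ j i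
            have h2 : |k j| ^ 2 ≤ κ ^ 2 := by
              apply pow_le_pow_left₀ (abs_nonneg _) this
            rwa [sq_abs] at h2
        _ = (N : ℝ) * κ ^ 2 := by simp [Finset.sum_const, nsmul_eq_mul]
    rw [div_mul_eq_mul_div, one_mul, div_le_iff₀ hNpos]
    linarith [hA']
  have hfinal : γ * (1 - q) * |s| ^ q ≤ κ ^ 2 * s ^ 2 := by
    have hs2 : (0 : ℝ) ≤ s ^ 2 := sq_nonneg s
    calc γ * (1 - q) * |s| ^ q ≤ (1 / N : ℝ) * A * s ^ 2 := hmain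
      _ ≤ κ ^ 2 * s ^ 2 := mul_le_mul_of_nonneg_right hAbound hs2
  -- translate to rpow inequality
  have hq2 : (0 : ℝ) < 2 - q := by linarith
  have hκ2 : (0 : ℝ) < κ ^ 2 := by positivity
  have hs2abs : s ^ 2 = |s| ^ ((2 : ℝ)) := by
    rw [← sq_abs s, ← Real.rpow_natCast |s| 2]
    norm_num
  have hstep : γ * (1 - q) / κ ^ 2 ≤ |s| ^ (2 - q) := by
    have h2q : |s| ^ (2 - q) = |s| ^ ((2:ℝ)) / |s| ^ q := Real.rpow_sub hsabs 2 q
    rw [h2q, div_le_div_iff₀ hκ2 hsQ, ← hs2abs]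
    linarith [hfinal]
  have h1q : (0:ℝ) < 1 - q := by linarith
  have hbase : (0 : ℝ) ≤ γ * (1 - q) / κ ^ 2 := by positivity
  have hmono : (γ * (1 - q) / κ ^ 2) ^ ((1:ℝ) / (2 - q)) ≤ (|s| ^ (2 - q)) ^ ((1:ℝ) / (2 - q)) :=
    Real.rpow_le_rpow hbase hstep (by positivity)
  have hright : (|s| ^ (2 - q)) ^ ((1:ℝ) / (2 - q)) = |s| := by
    rw [← Real.rpow_mul (abs_nonneg s), mul_one_div, div_self (ne_of_gt hq2), Real.rpow_one]
  have hleft : ((1 - q) / κ ^ 2) ^ ((1 : ℝ) / (2 - q)) * γ ^ ((1 : ℝ) / (2 - q))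
      = (γ * (1 - q) / κ ^ 2) ^ ((1:ℝ) / (2 - q)) := by
    rw [← Real.mul_rpow (by positivity) (le_of_lt hγ)]
    congr 1
    ring
  rw [hleft]
  calc (γ * (1 - q) / κ ^ 2) ^ ((1:ℝ) / (2 - q)) ≤ (|s| ^ (2 - q)) ^ ((1:ℝ) / (2 - q)) := hmono
    _ = |s| := hright
end

section
/- Let d, N be positive integers, x_1,…,x_N ∈ ℝ^d, σ* > 0, and let K be the N×N matrix with entries K_{ij} = exp(−σ*‖x_i − x_j‖²). Let y ∈ ℝ^N, q ∈ (0,1), γ > 0, and let κ > 0 be a constant with |K_{ij}| ≤ κ for all i, j. If α* ∈ ℝ^N is a global minimizer of the ℓ_q-regularized kernel regression objective Φ_q, then the number of nonzero coordinates of α* satisfies #{i : α*_i ≠ 0} ≤ (κ²/(γ(1−q)))^{q/(2−q)} · Σ_{i=1}^N |α*_i|^q. -/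
open Matrix Finset

/-- The number of nonzero coordinates of a global minimizer of the
`ℓ_q`-regularized Gaussian kernel regression objective (`0 < q < 1`) is at most
`(κ²/(γ(1−q)))^{q/(2−q)} · Σ_i |α*_i|^q`. -/
theorem lq_minimizer_sparsity_bound
    (d N : ℕ) (hd : 0 < d) (hN : 0 < N)
    (x : Fin N → EuclideanSpace ℝ (Fin d)) (σ : ℝ) (hσ : 0 < σ)
    (K : Matrix (Fin N) (Fin N) ℝ)
    (hK : ∀ i j, K i j = Real.exp (-σ * ‖x i - x j‖ ^ 2))
    (y : Fin N → ℝ) (q : ℝ) (hq0 : 0 < q) (hq1 : q < 1)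
    (γ : ℝ) (hγ : 0 < γ) (κ : ℝ) (hκ : 0 < κ)
    (hKκ : ∀ i j, |K i j| ≤ κ)
    (αs : Fin N → ℝ)
    (hmin : ∀ α : Fin N → ℝ,
      (1 / N : ℝ) * ∑ i, ((K *ᵥ αs) i - y i) ^ 2 + γ * ∑ j, |αs j| ^ q ≤
        (1 / N : ℝ) * ∑ i, ((K *ᵥ α) i - y i) ^ 2 + γ * ∑ j, |α j| ^ q) :
    (({i : Fin N | αs i ≠ 0} : Set (Fin N)).ncard : ℝ) ≤
      (κ ^ 2 / (γ * (1 - q))) ^ (q / (2 - q)) * ∑ i, |αs i| ^ q := by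
  have hNpos : (0:ℝ) < N := by exact_mod_cast hN
  have h2q : (0:ℝ) < 2 - q := by linarith
  -- key pointwise lower bound
  have key : ∀ i : Fin N, αs i ≠ 0 →
      (γ * (1 - q) / κ ^ 2) ^ (q / (2 - q)) ≤ |αs i| ^ q := by
    intro i hi
    set t : ℝ := αs i with ht
    set b : Fin N → ℝ := fun j => (∑ k ∈ Finset.univ.erase i, K j k * αs k) - y j with hb
    set c0 : ℝ := ∑ j ∈ Finset.univ.erase i, |αs j| ^ q with hc0
    have hupdate : ∀ (s : ℝ) (j : Fin N), (K *ᵥ Function.update αs i s) j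
        = K j i * s + (∑ k ∈ Finset.univ.erase i, K j k * αs k) := by
      intro s j
      simp only [Matrix.mulVec, dotProduct]
      rw [← Finset.add_sum_erase _ _ (Finset.mem_univ i)]
      simp only [Function.update_self]
      congr 1
      exact Finset.sum_congr rfl fun k hk => by
        rw [Function.update_of_ne (Finset.ne_of_mem_erase hk)]
    have hΦ : ∀ s : ℝ,
        (1 / N : ℝ) * ∑ j, ((K *ᵥ Function.update αs i s) j - y j) ^ 2
          + γ * ∑ j, |Function.update αs i s j| ^ q
        = (1 / N : ℝ) * ∑ j, (K j i * s + b j) ^ 2 + γ * (|s| ^ q + c0) := by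
      intro s
      have h1 : ∑ j, ((K *ᵥ Function.update αs i s) j - y j) ^ 2
          = ∑ j, (K j i * s + b j) ^ 2 :=
        Finset.sum_congr rfl fun j _ => by rw [hupdate s j]; simp only [hb]; ring
      have h2 : ∑ j, |Function.update αs i s j| ^ q = |s| ^ q + c0 := by
        rw [← Finset.add_sum_erase _ (fun j => |Function.update αs i s j| ^ q)
          (Finset.mem_univ i)]
        simp only [Function.update_self, hc0]
        congr 1
        exact Finset.sum_congr rfl fun k hk => by
          rw [Function.update_of_ne (Finset.ne_of_mem_erase hk)]
      rw [h1, h2]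
    have hupdt : Function.update αs i t = αs := Function.update_eq_self i αs
    have hmin' : ∀ s : ℝ,
        (1 / N : ℝ) * ∑ j, (K j i * t + b j) ^ 2 + γ * (|t| ^ q + c0)
          ≤ (1 / N : ℝ) * ∑ j, (K j i * s + b j) ^ 2 + γ * (|s| ^ q + c0) := by
      intro s
      rw [← hΦ s, ← hΦ t, hupdt]
      exact hmin _
    -- derivative facts
    have habsp : (0:ℝ) < |t| := abs_pos.mpr hi
    have ht2 : (0:ℝ) < t ^ 2 := by positivity
    have hfun : (fun s : ℝ => |s| ^ q) = fun s : ℝ => (s ^ 2) ^ (q / 2) := by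
      funext s
      rw [← sq_abs s, ← Real.rpow_natCast |s| 2, ← Real.rpow_mul (abs_nonneg s)]
      norm_num
      rw [show (2:ℝ) * (q / 2) = q by ring]
    have h2' := (hasDerivAt_pow 2 t).rpow_const (p := q / 2) (Or.inl (ne_of_gt ht2))
    have h3 : HasDerivAt (fun s : ℝ => |s| ^ q)
        (q * t * (t ^ 2) ^ (q / 2 - 1)) t := by
      rw [hfun]
      convert h2' using 1
      push_cast
      ring
    have hreg : HasDerivAt (fun s : ℝ => γ * (|s| ^ q + c0))
        (γ * (q * t * (t ^ 2) ^ (q / 2 - 1))) t := (h3.add_const c0).const_mul γ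
    have hquad : HasDerivAt (fun s : ℝ => (1 / N : ℝ) * ∑ j, (K j i * s + b j) ^ 2)
        ((1 / N : ℝ) * ∑ j, 2 * (K j i * t + b j) * K j i) t := by
      apply HasDerivAt.const_mul
      apply HasDerivAt.fun_sum
      intro j _
      have := (((hasDerivAt_id t).const_mul (K j i)).add_const (b j)).pow 2
      convert this using 1
      · rfl
      · rfl
      simp only [id_eq]
      push_cast
      ring
    have hlocal : IsLocalMin (fun s : ℝ =>
        (1 / N : ℝ) * ∑ j, (K j i * s + b j) ^ 2 + γ * (|s| ^ q + c0)) t :=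
      Filter.Eventually.of_forall hmin'
    have hstat0 := hlocal.hasDerivAt_eq_zero (hquad.add hreg)
    set S : ℝ := ∑ j, (K j i * t + b j) * K j i with hS
    set P : ℝ := ∑ j, (K j i) ^ 2 with hP
    have e1 : ∑ j, 2 * (K j i * t + b j) * K j i = 2 * S := by
      rw [hS, Finset.mul_sum]
      exact Finset.sum_congr rfl fun j _ => by ring
    have hmul : t ^ 2 * (t ^ 2) ^ (q / 2 - 1) = |t| ^ q := by
      have e2 : t ^ 2 * (t ^ 2) ^ (q / 2 - 1) = (t ^ 2) ^ ((1:ℝ) + (q / 2 - 1)) := by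
        rw [Real.rpow_add ht2, Real.rpow_one]
      rw [e2, show (1:ℝ) + (q / 2 - 1) = q / 2 by ring]
      exact (congrFun hfun t).symm
    have hstat' : 2 / (N:ℝ) * (S * t) = -(γ * q * |t| ^ q) := by
      linear_combination t * hstat0 - (1 / (N:ℝ)) * t * e1 - γ * q * hmul
    -- compare with setting coordinate to zero
    have hcomp := hmin' 0
    have hsum : ∑ j, (K j i * t + b j) ^ 2
        = ∑ j, (b j) ^ 2 + (2 * t * S - t ^ 2 * P) := by
      have h : ∀ j ∈ Finset.univ, (K j i * t + b j) ^ 2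
          = (b j) ^ 2 + (2 * t * ((K j i * t + b j) * K j i) - t ^ 2 * (K j i) ^ 2) :=
        fun j _ => by ring
      rw [Finset.sum_congr rfl h, Finset.sum_add_distrib, Finset.sum_sub_distrib,
        ← Finset.mul_sum, ← Finset.mul_sum]
    have hcomp' : (1 / N : ℝ) * (2 * t * S - t ^ 2 * P) + γ * |t| ^ q ≤ 0 := by
      rw [hsum] at hcomp
      have h0 : |(0:ℝ)| ^ q = 0 := by
        rw [abs_zero]; exact Real.zero_rpow (ne_of_gt hq0)
      rw [h0] at hcomp
      have hexp : ∑ j, (K j i * 0 + b j) ^ 2 = ∑ j, (b j) ^ 2 :=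
        Finset.sum_congr rfl fun j _ => by ring
      rw [hexp] at hcomp
      nlinarith [hcomp]
    have hPle : P ≤ (N:ℝ) * κ ^ 2 := by
      have h : ∀ j ∈ Finset.univ, (K j i) ^ 2 ≤ κ ^ 2 := fun j _ => by
        rw [← sq_abs]
        exact pow_le_pow_left₀ (abs_nonneg _) (hKκ j i) 2
      have := Finset.sum_le_card_nsmul Finset.univ (fun j => (K j i) ^ 2) (κ ^ 2) h
      simpa [hP, Finset.card_univ, nsmul_eq_mul] using this
    have hkey2 : γ * (1 - q) * |t| ^ q ≤ κ ^ 2 * t ^ 2 := by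
      have h1 : γ * (1 - q) * |t| ^ q ≤ t ^ 2 * P * (1 / N) := by
        have h4 : (1 / (N:ℝ)) * (2 * t * S) = -(γ * q * |t| ^ q) := by
          linear_combination hstat'
        linarith
      have h2 : t ^ 2 * P * (1 / N) ≤ t ^ 2 * ((N:ℝ) * κ ^ 2) * (1 / N) := by
        apply mul_le_mul_of_nonneg_right
          (mul_le_mul_of_nonneg_left hPle (sq_nonneg t)) (by positivity)
      have h3 : t ^ 2 * ((N:ℝ) * κ ^ 2) * (1 / N) = κ ^ 2 * t ^ 2 := by
        field_simp
      linarith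
    have hq' : (0:ℝ) < |t| ^ q := Real.rpow_pos_of_pos habsp q
    have hprod : |t| ^ ((2:ℝ) - q) * |t| ^ q = t ^ 2 := by
      rw [← Real.rpow_add habsp, show (2:ℝ) - q + q = 2 by ring,
        show ((2:ℝ)) = ((2:ℕ):ℝ) by norm_num, Real.rpow_natCast, sq_abs]
    have hstep : γ * (1 - q) / κ ^ 2 ≤ |t| ^ ((2:ℝ) - q) := by
      rw [div_le_iff₀ (by positivity)]
      apply le_of_mul_le_mul_right _ hq'
      calc γ * (1 - q) * |t| ^ q ≤ κ ^ 2 * t ^ 2 := hkey2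
        _ = |t| ^ ((2:ℝ) - q) * κ ^ 2 * |t| ^ q := by rw [← hprod]; ring
    have he : (0:ℝ) ≤ q / (2 - q) := by positivity
    have hbase : (0:ℝ) < γ * (1 - q) / κ ^ 2 :=
      div_pos (mul_pos hγ (by linarith)) (by positivity)
    have := Real.rpow_le_rpow hbase.le hstep he
    calc (γ * (1 - q) / κ ^ 2) ^ (q / (2 - q))
        ≤ (|t| ^ ((2:ℝ) - q)) ^ (q / (2 - q)) := this
      _ = |t| ^ (((2:ℝ) - q) * (q / (2 - q))) := (Real.rpow_mul habsp.le _ _).symm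
      _ = |t| ^ q := by rw [show ((2:ℝ) - q) * (q / (2 - q)) = q by field_simp]
  -- counting
  set c : ℝ := (γ * (1 - q) / κ ^ 2) ^ (q / (2 - q)) with hc
  have hcpos : 0 < c :=
    Real.rpow_pos_of_pos (div_pos (mul_pos hγ (by linarith)) (by positivity)) _
  have hset : ({i : Fin N | αs i ≠ 0} : Set (Fin N))
      = ↑(Finset.univ.filter (fun i => αs i ≠ 0)) := by ext i; simp
  rw [hset, Set.ncard_coe_finset]
  set F := Finset.univ.filter (fun i : Fin N => αs i ≠ 0) with hF
  have h1 : (F.card : ℝ) * c ≤ ∑ i ∈ F, |αs i| ^ q := by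
    have := Finset.card_nsmul_le_sum F (fun i => |αs i| ^ q) c
      (fun i hiF => key i (by simpa [hF] using hiF))
    simpa [nsmul_eq_mul] using this
  have h2 : ∑ i ∈ F, |αs i| ^ q ≤ ∑ i, |αs i| ^ q :=
    Finset.sum_le_sum_of_subset_of_nonneg (Finset.subset_univ F)
      (fun i _ _ => Real.rpow_nonneg (abs_nonneg _) q)
  have hgoalc : (κ ^ 2 / (γ * (1 - q))) ^ (q / (2 - q)) = c⁻¹ := by
    rw [hc, show κ ^ 2 / (γ * (1 - q)) = (γ * (1 - q) / κ ^ 2)⁻¹ by rw [inv_div],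
      Real.inv_rpow (le_of_lt (div_pos (mul_pos hγ (by linarith)) (by positivity)))]
  rw [hgoalc, inv_mul_eq_div, le_div_iff₀ hcpos]
  linarith
end

section
/- Let z = ((x_1,y_1),…,(x_N,y_N)) be a sample in ℝ^d × ℝ, let σ* > 0, q ∈ (0,1), γ > 0, N_sv a positive integer, and let κ ≥ 1 be a constant bounding the Gaussian kernel values (|exp(−σ‖x − x'‖²)| ≤ κ² for all σ > 0 and x, x'). Set λ = ((1−q)/κ²)^{q/(2−q)} γ^{2/(2−q)}. Let f_{z,λ} be any minimizer of E_z(f) + λ R₀(f) over the class F_{N_sv}. Let g : ℝ^d → ℝ be any function and define f_{z,γ}(·) = (1/N) Σ_{i=1}^N g(x_i) exp(−σ*‖· − x_i‖²). Let β¹ ∈ ℝ^N be any minimizer of E_z(Σ_{i=1}^N β_i exp(−σ*‖· − x_i‖²)) + γ Σ_{i=1}^N |β_i| over β ∈ ℝ^N (assume all these minimizers exist). Then E_z(f_{z,λ}) + λ R₀(f_{z,λ}) ≤ E_z(f_{z,γ}) + (γ/N) Σ_{i=1}^N |g(x_i)| + γ N^{1−q} (Σ_{i=1}^N |β¹_i|)^q.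 -/
open Finset

/-- The function `t ↦ Σ_k Σ_i α_{k,i} exp(−θ_k ‖t − x_i‖²)` represented by bandwidths
`θ` and coefficients `α`, anchored at the points `x_1, …, x_N`. -/
noncomputable def repFun {d N : ℕ} (x : Fin N → EuclideanSpace ℝ (Fin d)) {m : ℕ}
    (θ : Fin m → ℝ) (α : Fin m → Fin N → ℝ) : EuclideanSpace ℝ (Fin d) → ℝ :=
  fun t => ∑ k, ∑ i, α k i * Real.exp (-(θ k) * ‖t - x i‖ ^ 2)

/-- `IsRep x f m θ α` : `(m, θ, α)` is a representation of `f` with positive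
bandwidths, anchored at the points `x`. -/
def IsRep {d N : ℕ} (x : Fin N → EuclideanSpace ℝ (Fin d))
    (f : EuclideanSpace ℝ (Fin d) → ℝ) (m : ℕ) (θ : Fin m → ℝ)
    (α : Fin m → Fin N → ℝ) : Prop :=
  (∀ k, 0 < θ k) ∧ f = repFun x θ α

/-- Membership in the class `F` of functions admitting some representation. -/
def InF {d N : ℕ} (x : Fin N → EuclideanSpace ℝ (Fin d))
    (f : EuclideanSpace ℝ (Fin d) → ℝ) : Prop :=
  ∃ m θ α, IsRep x f m θ α

/-- Membership in the subclass `F_{N_sv}` of functions admitting a representation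
with at most `Nsv` bandwidths. -/
def InFsv {d N : ℕ} (x : Fin N → EuclideanSpace ℝ (Fin d)) (Nsv : ℕ)
    (f : EuclideanSpace ℝ (Fin d) → ℝ) : Prop :=
  ∃ m, m ≤ Nsv ∧ ∃ (θ : Fin m → ℝ) (α : Fin m → Fin N → ℝ), IsRep x f m θ α

/-- The sparsity measure `R₀(f)`: the minimal number of nonzero coefficients over
all representations of `f`. -/
noncomputable def R0 {d N : ℕ} (x : Fin N → EuclideanSpace ℝ (Fin d))
    (f : EuclideanSpace ℝ (Fin d) → ℝ) : ℕ :=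
  sInf {n : ℕ | ∃ m θ α, IsRep x f m θ α ∧
    ({p : Fin m × Fin N | α p.1 p.2 ≠ 0} : Set (Fin m × Fin N)).ncard = n}

/-- The empirical error `E_z(f) = (1/N) Σ_i (f(x_i) − y_i)²`. -/
noncomputable def empErr {d N : ℕ} (x : Fin N → EuclideanSpace ℝ (Fin d))
    (y : Fin N → ℝ) (f : EuclideanSpace ℝ (Fin d) → ℝ) : ℝ :=
  (1 / N : ℝ) * ∑ i, (f (x i) - y i) ^ 2


private noncomputable def Efun (N : ℕ) (K : Fin N → Fin N → ℝ) (y : Fin N → ℝ)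
    (β : Fin N → ℝ) : ℝ :=
  (1 / N : ℝ) * ∑ j, ((∑ l, β l * K j l) - y j) ^ 2

private lemma sum_comp_update {N : ℕ} (G : ℝ → ℝ) (β : Fin N → ℝ) (i : Fin N) (b : ℝ) :
    ∑ i', G (Function.update β i b i') = (∑ i', G (β i')) - G (β i) + G b := by
  classical
  have h1 : ∀ i', G (Function.update β i b i') =
      Function.update (fun i' => G (β i')) i (G b) i' := by
    intro i'
    by_cases h : i' = i
    · subst h; simp
    · simp [Function.update_of_ne h]
  rw [Finset.sum_congr rfl fun i' _ => h1 i', Finset.sum_update_of_mem (Finset.mem_univ i),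
    Finset.sum_eq_sum_sdiff_singleton_add (Finset.mem_univ i) (fun i' => G (β i'))]
  ring

private lemma Efun_update {N : ℕ} (K : Fin N → Fin N → ℝ) (y : Fin N → ℝ)
    (β : Fin N → ℝ) (i : Fin N) (b : ℝ) :
    Efun N K y (Function.update β i b) =
      Efun N K y β + (b - β i) * ((2 / N) * ∑ j, ((∑ l, β l * K j l) - y j) * K j i)
        + (b - β i) ^ 2 * ((1 / N) * ∑ j, (K j i) ^ 2) := by
  classical
  have hrow : ∀ j, (∑ l, Function.update β i b l * K j l)
      = (∑ l, β l * K j l) + (b - β i) * K j i := by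
    intro j
    have h1 : ∀ l, Function.update β i b l * K j l
        = β l * K j l + (if l = i then (b - β i) * K j i else 0) := by
      intro l
      by_cases h : l = i
      · subst h; simp [Function.update_self]; ring
      · rw [Function.update_of_ne h, if_neg h, add_zero]
    rw [Finset.sum_congr rfl fun l _ => h1 l, Finset.sum_add_distrib,
      Finset.sum_ite_eq' Finset.univ i (fun _ => (b - β i) * K j i)]
    simp
  simp only [Efun]
  have h3 : (∑ j, ((∑ l, Function.update β i b l * K j l) - y j) ^ 2)
      = ∑ j, (((∑ l, β l * K j l) - y j) ^ 2
          + (2 * (b - β i)) * (((∑ l, β l * K j l) - y j) * K j i)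
          + (b - β i) ^ 2 * (K j i) ^ 2) := by
    refine Finset.sum_congr rfl fun j _ => ?_
    rw [hrow j]; ring
  rw [h3, Finset.sum_add_distrib, Finset.sum_add_distrib, ← Finset.mul_sum, ← Finset.mul_sum]
  ring

private lemma psi_aux {γ q T κ : ℝ} (hγ : 0 < γ) (hq0 : 0 < q) (hq1 : q < 1)
    (hT : 0 < T) (hκ : 1 ≤ κ) (hkey : (1 - q) * (γ * T ^ q) = κ ^ 2 * (T * T)) :
    ∀ u : ℝ, 0 < u → u < T → u * (T - u) + γ * u * (T ^ q / T) ≤ γ * u ^ q := by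
  intro u hu huT
  have ht0 : 0 < u / T := div_pos hu hT
  have ht1 : u / T < 1 := (div_lt_one hT).2 huT
  set t := u / T with htdef
  have hu' : u = t * T := by rw [htdef, div_mul_cancel₀ u hT.ne']
  set a := t ^ (1 - q) with hadef
  have ha0 : 0 < a := Real.rpow_pos_of_pos ht0 _
  have hAM : a ≤ (1 - q) * t + q := by
    have h := Real.geom_mean_le_arith_mean2_weighted
      (by linarith : (0:ℝ) ≤ 1 - q) hq0.le ht0.le zero_le_one (by ring)
    simpa [Real.one_rpow] using h
  have ha1 : a ≤ 1 := by nlinarith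
  have hκ2 : (1:ℝ) ≤ κ ^ 2 := by nlinarith
  have h3 : u ^ q * a = t * T ^ q := by
    rw [hu', Real.mul_rpow ht0.le hT.le, hadef, mul_right_comm, ← Real.rpow_add ht0,
      show q + (1 - q) = 1 by ring, Real.rpow_one]
  apply le_of_mul_le_mul_right _ ha0
  have hRHS : γ * u ^ q * a = γ * (t * T ^ q) := by rw [mul_assoc, h3]
  rw [hRHS, hu']
  rw [show γ * (t * T) * (T ^ q / T) = γ * (t * T ^ q) by field_simp]
  have h1q : (0:ℝ) < 1 - q := by linarith
  have hint1 : (0:ℝ) ≤ (1 - q) * (1 - t) * (κ ^ 2 - a) * (t * (T * T)) := by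
    apply mul_nonneg
    · apply mul_nonneg; apply mul_nonneg
      · linarith
      · linarith
      · linarith
    · positivity
  have hkey2 : (1 - q) * (γ * T ^ q) * (t * a) = κ ^ 2 * (T * T) * (t * a) := by rw [hkey]
  have hkey3 : (1 - q) * (γ * T ^ q) * t = κ ^ 2 * (T * T) * t := by rw [hkey]
  have hint2 : κ ^ 2 * (T * T) * t * a ≤ κ ^ 2 * (T * T) * t * ((1 - q) * t + q) := by
    apply mul_le_mul_of_nonneg_left hAM
    positivity
  nlinarith [hint1, hint2, hkey2, hkey3, mul_pos ht0 hT, h1q]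

private lemma hoelder_q {N : ℕ} (hN : 0 < N) (q : ℝ) (hq0 : 0 < q) (hq1 : q < 1)
    (b : Fin N → ℝ) (hb : ∀ i, 0 ≤ b i) :
    ∑ i, (b i) ^ q ≤ (N : ℝ) ^ ((1:ℝ) - q) * (∑ i, b i) ^ q := by
  have hNR : (0:ℝ) < N := by exact_mod_cast hN
  have hp : (1:ℝ) ≤ 1 / q := by rw [le_div_iff₀ hq0]; linarith
  have h := Real.arith_mean_le_rpow_mean Finset.univ (fun _ => 1 / (N:ℝ))
    (fun i => (b i) ^ q) (fun i _ => by positivity)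
    (by simp [Finset.sum_const, Finset.card_univ]; field_simp)
    (fun i _ => Real.rpow_nonneg (hb i) q) hp
  have hbq : ∀ i : Fin N, ((b i) ^ q) ^ (1 / q) = b i := by
    intro i
    rw [← Real.rpow_mul (hb i), mul_one_div_cancel hq0.ne', Real.rpow_one]
  simp only [hbq, one_div_one_div] at h
  rw [← Finset.mul_sum, ← Finset.mul_sum] at h
  have hsum0 : 0 ≤ ∑ i, b i := Finset.sum_nonneg fun i _ => hb i
  have hmr : ((1 / (N:ℝ)) * ∑ i, b i) ^ q = (1 / (N:ℝ)) ^ q * (∑ i, b i) ^ q :=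
    Real.mul_rpow (by positivity) hsum0
  rw [hmr] at h
  have hNq : (N:ℝ) * (1 / (N:ℝ)) ^ q = (N:ℝ) ^ ((1:ℝ) - q) := by
    rw [one_div, ← Real.rpow_neg_one (N:ℝ), ← Real.rpow_mul hNR.le (-1) q,
      show (N:ℝ) * (N:ℝ) ^ ((-1) * q) = (N:ℝ) ^ (1:ℝ) * (N:ℝ) ^ ((-1) * q) from by
        rw [Real.rpow_one], ← Real.rpow_add hNR]
    ring_nf
  calc ∑ i, (b i) ^ q = (N:ℝ) * ((1 / (N:ℝ)) * ∑ i, (b i) ^ q) := by field_simp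
    _ ≤ (N:ℝ) * ((1 / (N:ℝ)) ^ q * (∑ i, b i) ^ q) := mul_le_mul_of_nonneg_left h hNR.le
    _ = ((N:ℝ) * (1 / (N:ℝ)) ^ q) * (∑ i, b i) ^ q := by ring
    _ = (N:ℝ) ^ ((1:ℝ) - q) * (∑ i, b i) ^ q := by rw [hNq]

private lemma combo_aux {Eb E0 Ev L A u v p T absu : ℝ}
    (hE0 : E0 = Eb + (0 - u) * L + (0 - u) ^ 2 * A)
    (hEv : Ev = Eb + (v - u) * L + (v - u) ^ 2 * A)
    (hc1 : (1 - p) * (0 - u) + p * (v - u) = 0)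
    (hc2 : (1 - p) * (0 - u) ^ 2 + p * (v - u) ^ 2 = absu * (T - absu)) :
    (1 - p) * E0 + p * Ev = Eb + (absu * (T - absu)) * A := by
  rw [hE0, hEv]
  linear_combination L * hc1 + A * hc2

private lemma sparsify {N : ℕ} (hN : 0 < N) (K : Fin N → Fin N → ℝ) (y : Fin N → ℝ)
    (hK0 : ∀ j i, 0 ≤ K j i) (hK1 : ∀ j i, K j i ≤ 1)
    (γ q T lam : ℝ) (hγ : 0 < γ) (hq0 : 0 < q)
    (hT : 0 < T) (hlamT : lam = γ * T ^ q)
    (hPSI : ∀ u : ℝ, 0 < u → u < T → u * (T - u) + γ * u * (T ^ q / T) ≤ γ * u ^ q) :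
    ∀ (n : ℕ) (β : Fin N → ℝ), ({i | 0 < |β i| ∧ |β i| < T} : Set (Fin N)).ncard = n →
    ∃ β' : Fin N → ℝ,
      Efun N K y β' + lam * (({i | β' i ≠ 0} : Set (Fin N)).ncard : ℝ) ≤
        Efun N K y β + ∑ i, γ * (|β i| + |β i| ^ q) := by
  classical
  intro n
  induction n with
  | zero =>
    intro β hS
    refine ⟨β, ?_⟩
    have hempty : ({i | 0 < |β i| ∧ |β i| < T} : Set (Fin N)) = ∅ :=
      (Set.ncard_eq_zero (Set.toFinite _)).1 hS
    have hdich : ∀ i : Fin N, β i ≠ 0 → T ≤ |β i| := by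
      intro i hi
      by_contra hlt
      have hmem : i ∈ ({i | 0 < |β i| ∧ |β i| < T} : Set (Fin N)) :=
        ⟨abs_pos.2 hi, not_le.1 hlt⟩
      rw [hempty] at hmem
      exact hmem
    have hset : ({i | β i ≠ 0} : Set (Fin N)) = ↑(Finset.univ.filter (fun i => β i ≠ 0)) := by
      ext i; simp
    rw [hset, Set.ncard_coe_finset]
    have h1 : lam * (((Finset.univ.filter (fun i => β i ≠ 0)).card : ℕ) : ℝ)
        = ∑ _i ∈ Finset.univ.filter (fun i => β i ≠ 0), lam := by
      rw [Finset.sum_const, nsmul_eq_mul, mul_comm]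
    have h2 : (∑ _i ∈ Finset.univ.filter (fun i => β i ≠ 0), lam)
        ≤ ∑ i ∈ Finset.univ.filter (fun i => β i ≠ 0), γ * (|β i| + |β i| ^ q) := by
      refine Finset.sum_le_sum fun i hi => ?_
      have hne : β i ≠ 0 := (Finset.mem_filter.1 hi).2
      have hTle : T ≤ |β i| := hdich i hne
      have hple : T ^ q ≤ |β i| ^ q := Real.rpow_le_rpow hT.le hTle hq0.le
      have habs : (0:ℝ) ≤ |β i| := abs_nonneg _
      rw [hlamT]
      nlinarith [hγ]
    have h3 : (∑ i ∈ Finset.univ.filter (fun i => β i ≠ 0), γ * (|β i| + |β i| ^ q))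
        ≤ ∑ i, γ * (|β i| + |β i| ^ q) := by
      refine Finset.sum_le_sum_of_subset_of_nonneg (Finset.subset_univ _) fun i _ _ => ?_
      have : (0:ℝ) ≤ |β i| + |β i| ^ q := by positivity
      exact mul_nonneg hγ.le this
    linarith
  | succ n ih =>
    intro β hS
    have hne : ({i | 0 < |β i| ∧ |β i| < T} : Set (Fin N)).Nonempty :=
      Set.nonempty_of_ncard_ne_zero (by rw [hS]; exact Nat.succ_ne_zero n)
    obtain ⟨i, hiS⟩ := hne
    obtain ⟨hi1, hi2⟩ := hiS
    set v : ℝ := if 0 < β i then T else -T with hvdef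
    have hv : |v| = T := by
      by_cases h : 0 < β i
      · rw [hvdef]; simp [h, abs_of_pos hT]
      · rw [hvdef]; simp [h, abs_of_pos hT]
    have hbne : β i ≠ 0 := fun h => by simp [h] at hi1
    have hupd : ∀ b : ℝ, ¬(0 < |b| ∧ |b| < T) →
        ({i' | 0 < |Function.update β i b i'| ∧ |Function.update β i b i'| < T} : Set (Fin N))
          = {i' | 0 < |β i'| ∧ |β i'| < T} \ {i} := by
      intro b hb
      ext i'
      by_cases h : i' = i
      · subst h
        simp only [Set.mem_setOf_eq, Function.update_self, Set.mem_diff,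
          Set.mem_singleton_iff]
        constructor
        · intro hc; exact absurd hc hb
        · intro hc; exact absurd trivial hc.2
      · simp only [Set.mem_setOf_eq, Function.update_of_ne h, Set.mem_diff,
          Set.mem_singleton_iff]
        constructor
        · intro hc; exact ⟨hc, h⟩
        · intro hc; exact hc.1
    have hcard : ∀ b : ℝ, ¬(0 < |b| ∧ |b| < T) →
        ({i' | 0 < |Function.update β i b i'| ∧ |Function.update β i b i'| < T} :
          Set (Fin N)).ncard = n := by
      intro b hb
      have hmem : i ∈ ({i' | 0 < |β i'| ∧ |β i'| < T} : Set (Fin N)) := ⟨hi1, hi2⟩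
      rw [hupd b hb, Set.ncard_diff_singleton_of_mem hmem, hS]
      omega
    obtain ⟨β₀', h0⟩ := ih (Function.update β i 0) (hcard 0 (by simp))
    obtain ⟨βv', hvv⟩ := ih (Function.update β i v)
      (hcard v (by rw [not_and]; intro _; rw [hv]; exact lt_irrefl T))
    -- abbreviations
    set E := Efun N K y with hEdef
    set L : ℝ := (2 / N) * ∑ j, ((∑ l, β l * K j l) - y j) * K j i with hLdef
    set A : ℝ := (1 / N) * ∑ j, (K j i) ^ 2 with hAdef
    have hE0 : E (Function.update β i 0) = E β + (0 - β i) * L + (0 - β i) ^ 2 * A :=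
      Efun_update K y β i 0
    have hEv : E (Function.update β i v) = E β + (v - β i) * L + (v - β i) ^ 2 * A :=
      Efun_update K y β i v
    have hNR : (0:ℝ) < N := by exact_mod_cast hN
    have hA0 : 0 ≤ A := by
      rw [hAdef]
      have : (0:ℝ) ≤ ∑ j, (K j i) ^ 2 := Finset.sum_nonneg fun j _ => sq_nonneg _
      positivity
    have hA1 : A ≤ 1 := by
      rw [hAdef]
      have h1 : (∑ j, (K j i) ^ 2) ≤ ∑ _j : Fin N, (1:ℝ) :=
        Finset.sum_le_sum fun j _ => by nlinarith [hK0 j i, hK1 j i]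
      have h2 : (∑ _j : Fin N, (1:ℝ)) = (N:ℝ) := by
        rw [Finset.sum_const, nsmul_eq_mul, mul_one, Finset.card_univ, Fintype.card_fin]
      rw [h2] at h1
      rw [div_mul_eq_mul_div, one_mul, div_le_one hNR]
      exact h1
    clear_value E L A
    set p : ℝ := |β i| / T with hpdef
    have hp0 : 0 < p := div_pos hi1 hT
    have hp1 : p < 1 := (div_lt_one hT).2 hi2
    have hc1 : (1 - p) * (0 - β i) + p * (v - β i) = 0 := by
      rw [hpdef, hvdef]
      by_cases h : 0 < β i
      · rw [if_pos h, abs_of_pos h]; field_simp; ring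
      · rw [if_neg h, abs_of_neg (lt_of_le_of_ne (not_lt.1 h) hbne)]; field_simp; ring
    have hc2 : (1 - p) * (0 - β i) ^ 2 + p * (v - β i) ^ 2 = |β i| * (T - |β i|) := by
      rw [hpdef, hvdef]
      by_cases h : 0 < β i
      · rw [if_pos h, abs_of_pos h]; field_simp; ring
      · rw [if_neg h, abs_of_neg (lt_of_le_of_ne (not_lt.1 h) hbne)]; field_simp; ring
    have hcomb : (1 - p) * E (Function.update β i 0) + p * E (Function.update β i v)
        = E β + (|β i| * (T - |β i|)) * A := combo_aux hE0 hEv hc1 hc2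
    -- charge sums
    have hC : ∀ b : ℝ, (∑ i', γ * (|Function.update β i b i'| + |Function.update β i b i'| ^ q))
        = (∑ i', γ * (|β i'| + |β i'| ^ q)) - γ * (|β i| + |β i| ^ q) + γ * (|b| + |b| ^ q) :=
      fun b => sum_comp_update (fun t => γ * (|t| + |t| ^ q)) β i b
    have hC0 : (∑ i', γ * (|Function.update β i (0:ℝ) i'| + |Function.update β i (0:ℝ) i'| ^ q))
        = (∑ i', γ * (|β i'| + |β i'| ^ q)) - γ * (|β i| + |β i| ^ q) := by
      rw [hC 0]
      simp [Real.zero_rpow hq0.ne']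
    have hCv : (∑ i', γ * (|Function.update β i v i'| + |Function.update β i v i'| ^ q))
        = (∑ i', γ * (|β i'| + |β i'| ^ q)) - γ * (|β i| + |β i| ^ q) + γ * (T + T ^ q) := by
      rw [hC v, hv]
    have h4 : p * (γ * (T + T ^ q)) = γ * |β i| + γ * |β i| * (T ^ q / T) := by
      rw [hpdef]
      field_simp
    have h5 := hPSI (|β i|) hi1 hi2
    have h6 : (|β i| * (T - |β i|)) * A ≤ |β i| * (T - |β i|) := by
      have hx : (0:ℝ) ≤ |β i| * (T - |β i|) :=
        mul_nonneg (abs_nonneg _) (by linarith)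
      exact mul_le_of_le_one_right hx hA1
    have hfinal : (1 - p) * (E (Function.update β i 0)
          + ∑ i', γ * (|Function.update β i (0:ℝ) i'| + |Function.update β i (0:ℝ) i'| ^ q))
        + p * (E (Function.update β i v)
          + ∑ i', γ * (|Function.update β i v i'| + |Function.update β i v i'| ^ q))
        ≤ E β + ∑ i', γ * (|β i'| + |β i'| ^ q) := by
      have hexp : (1 - p) * (E (Function.update β i 0)
            + ∑ i', γ * (|Function.update β i (0:ℝ) i'| + |Function.update β i (0:ℝ) i'| ^ q))
          + p * (E (Function.update β i v)
            + ∑ i', γ * (|Function.update β i v i'| + |Function.update β i v i'| ^ q))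
          = ((1 - p) * E (Function.update β i 0) + p * E (Function.update β i v))
            + ((∑ i', γ * (|β i'| + |β i'| ^ q)) - γ * (|β i| + |β i| ^ q))
            + p * (γ * (T + T ^ q)) := by
        rw [hC0, hCv]; ring
      rw [hexp, hcomb, h4]
      linarith
    by_cases hcmp : E (Function.update β i 0)
          + ∑ i', γ * (|Function.update β i (0:ℝ) i'| + |Function.update β i (0:ℝ) i'| ^ q)
        ≤ E (Function.update β i v)
          + ∑ i', γ * (|Function.update β i v i'| + |Function.update β i v i'| ^ q)
    · refine ⟨β₀', ?_⟩
      have hmid : E (Function.update β i 0)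
            + ∑ i', γ * (|Function.update β i (0:ℝ) i'| + |Function.update β i (0:ℝ) i'| ^ q)
          ≤ (1 - p) * (E (Function.update β i 0)
            + ∑ i', γ * (|Function.update β i (0:ℝ) i'| + |Function.update β i (0:ℝ) i'| ^ q))
          + p * (E (Function.update β i v)
            + ∑ i', γ * (|Function.update β i v i'| + |Function.update β i v i'| ^ q)) := by
        have := mul_le_mul_of_nonneg_left hcmp hp0.le
        linarith
      exact le_trans h0 (le_trans hmid hfinal)
    · refine ⟨βv', ?_⟩
      push_neg at hcmp
      have hmid : E (Function.update β i v)
            + ∑ i', γ * (|Function.update β i v i'| + |Function.update β i v i'| ^ q)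
          ≤ (1 - p) * (E (Function.update β i 0)
            + ∑ i', γ * (|Function.update β i (0:ℝ) i'| + |Function.update β i (0:ℝ) i'| ^ q))
          + p * (E (Function.update β i v)
            + ∑ i', γ * (|Function.update β i v i'| + |Function.update β i v i'| ^ q)) := by
        have h1p : (0:ℝ) ≤ 1 - p := by linarith
        have := mul_le_mul_of_nonneg_left hcmp.le h1p
        linarith
      exact le_trans hvv (le_trans hmid hfinal)

/-- Comparison inequality for the `ℓ₀`-regularized minimizer over
`F_{N_sv}`: with `λ = ((1−q)/κ²)^{q/(2−q)} γ^{2/(2−q)}`,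
`E_z(f_{z,λ}) + λ R₀(f_{z,λ}) ≤ E_z(f_{z,γ}) + (γ/N) Σ_i |g(x_i)| + γ N^{1−q} (Σ_i |β¹_i|)^q`. -/
theorem l0_minimizer_comparison
    (d N : ℕ) (hd : 0 < d) (hN : 0 < N)
    (x : Fin N → EuclideanSpace ℝ (Fin d)) (y : Fin N → ℝ)
    (σ : ℝ) (hσ : 0 < σ) (q : ℝ) (hq0 : 0 < q) (hq1 : q < 1)
    (γ : ℝ) (hγ : 0 < γ) (Nsv : ℕ) (hNsv : 0 < Nsv)
    (κ : ℝ) (hκ : 1 ≤ κ)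
    (hker : ∀ s : ℝ, 0 < s → ∀ u v : EuclideanSpace ℝ (Fin d),
      |Real.exp (-s * ‖u - v‖ ^ 2)| ≤ κ ^ 2)
    (lam : ℝ)
    (hlam : lam = ((1 - q) / κ ^ 2) ^ (q / (2 - q)) * γ ^ (2 / (2 - q)))
    (fzl : EuclideanSpace ℝ (Fin d) → ℝ)
    (hfzl : InFsv x Nsv fzl)
    (hfzlmin : ∀ f : EuclideanSpace ℝ (Fin d) → ℝ, InFsv x Nsv f →
      empErr x y fzl + lam * (R0 x fzl : ℝ) ≤ empErr x y f + lam * (R0 x f : ℝ))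
    (g : EuclideanSpace ℝ (Fin d) → ℝ)
    (fzg : EuclideanSpace ℝ (Fin d) → ℝ)
    (hfzg : fzg = fun t => (1 / N : ℝ) * ∑ i, g (x i) * Real.exp (-σ * ‖t - x i‖ ^ 2))
    (β1 : Fin N → ℝ)
    (hβ1 : ∀ β : Fin N → ℝ,
      empErr x y (fun t => ∑ i, β1 i * Real.exp (-σ * ‖t - x i‖ ^ 2)) + γ * ∑ i, |β1 i| ≤
        empErr x y (fun t => ∑ i, β i * Real.exp (-σ * ‖t - x i‖ ^ 2)) + γ * ∑ i, |β i|) :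
    empErr x y fzl + lam * (R0 x fzl : ℝ) ≤
      empErr x y fzg + (γ / N) * ∑ i, |g (x i)| +
        γ * (N : ℝ) ^ (1 - q) * (∑ i, |β1 i|) ^ q := by
  classical
  have hκ0 : (0:ℝ) < κ := lt_of_lt_of_le one_pos hκ
  have hκ2 : (0:ℝ) < κ ^ 2 := by positivity
  have h2q : (0:ℝ) < 2 - q := by linarith
  have h1q : (0:ℝ) < 1 - q := by linarith
  have hbase : (0:ℝ) < (1 - q) * γ / κ ^ 2 := by positivity
  set T : ℝ := ((1 - q) * γ / κ ^ 2) ^ ((2 - q)⁻¹) with hTdef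
  have hT : 0 < T := Real.rpow_pos_of_pos hbase _
  have hTq : T ^ ((2:ℝ) - q) = (1 - q) * γ / κ ^ 2 := by
    rw [hTdef, ← Real.rpow_mul hbase.le, inv_mul_cancel₀ h2q.ne', Real.rpow_one]
  have hlamT : lam = γ * T ^ q := by
    have h1 : T ^ q = ((1 - q) * γ / κ ^ 2) ^ (q / (2 - q)) := by
      rw [hTdef, ← Real.rpow_mul hbase.le]
      congr 1
      field_simp
    have h2 : ((1 - q) * γ / κ ^ 2 : ℝ) = ((1 - q) / κ ^ 2) * γ := by ring
    have h3 : (((1 - q) / κ ^ 2) * γ : ℝ) ^ (q / (2 - q))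
        = ((1 - q) / κ ^ 2) ^ (q / (2 - q)) * γ ^ (q / (2 - q)) :=
      Real.mul_rpow (by positivity) hγ.le
    have h4 : γ * γ ^ (q / (2 - q)) = γ ^ (2 / (2 - q)) := by
      rw [show γ * γ ^ (q / (2 - q)) = γ ^ (1:ℝ) * γ ^ (q / (2 - q)) from by
        rw [Real.rpow_one], ← Real.rpow_add hγ]
      congr 1
      field_simp; ring
    rw [hlam, h1, h2, h3, ← h4]
    ring
  have hlampos : 0 < lam := by
    rw [hlamT]; positivity
  have hkey : (1 - q) * (γ * T ^ q) = κ ^ 2 * (T * T) := by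
    have h1 : κ ^ 2 * T ^ ((2:ℝ) - q) = (1 - q) * γ := by
      rw [hTq]; field_simp
    calc (1 - q) * (γ * T ^ q) = ((1 - q) * γ) * T ^ q := by ring
      _ = (κ ^ 2 * T ^ ((2:ℝ) - q)) * T ^ q := by rw [h1]
      _ = κ ^ 2 * (T ^ ((2:ℝ) - q) * T ^ q) := by ring
      _ = κ ^ 2 * T ^ ((2:ℝ) - q + q) := by rw [Real.rpow_add hT]
      _ = κ ^ 2 * T ^ ((2:ℕ):ℝ) := by norm_num
      _ = κ ^ 2 * (T * T) := by rw [Real.rpow_natCast]; ring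
  -- the kernel matrix
  set K : Fin N → Fin N → ℝ := fun j l => Real.exp (-σ * ‖x j - x l‖ ^ 2) with hKdef
  have hK0 : ∀ j l, 0 ≤ K j l := fun j l => (Real.exp_pos _).le
  have hK1 : ∀ j l, K j l ≤ 1 := by
    intro j l
    rw [hKdef]
    rw [Real.exp_le_one_iff]
    have hnn : (0:ℝ) ≤ σ * ‖x j - x l‖ ^ 2 := mul_nonneg hσ.le (by positivity)
    linarith
  have hPSI := psi_aux hγ hq0 hq1 hT hκ hkey
  obtain ⟨β', hβ'⟩ := sparsify hN K y hK0 hK1 γ q T lam hγ hq0 hT hlamT hPSI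
    (({i | 0 < |β1 i| ∧ |β1 i| < T} : Set (Fin N)).ncard) β1 rfl
  set fstar : EuclideanSpace ℝ (Fin d) → ℝ :=
    fun t => ∑ i, β' i * Real.exp (-σ * ‖t - x i‖ ^ 2) with hfstar
  have hrep : IsRep x fstar 1 (fun _ => σ) (fun _ => β') := by
    refine ⟨fun _ => hσ, ?_⟩
    rw [hfstar]
    funext t
    simp [repFun, Fin.sum_univ_one]
  have hInFsv : InFsv x Nsv fstar := ⟨1, hNsv, fun _ => σ, fun _ => β', hrep⟩
  have hncard : ({p : Fin 1 × Fin N | (fun (_ : Fin 1) (l : Fin N) => β' l) p.1 p.2 ≠ 0} :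
      Set (Fin 1 × Fin N)).ncard = ({i | β' i ≠ 0} : Set (Fin N)).ncard := by
    have himg : ({p : Fin 1 × Fin N | (fun (_ : Fin 1) (l : Fin N) => β' l) p.1 p.2 ≠ 0} :
        Set (Fin 1 × Fin N)) = (fun l : Fin N => ((0 : Fin 1), l)) '' {l | β' l ≠ 0} := by
      ext ⟨k, l⟩
      simp only [Set.mem_setOf_eq, Set.mem_image]
      constructor
      · intro h
        exact ⟨l, h, by rw [show (0 : Fin 1) = k from Subsingleton.elim _ _]⟩
      · rintro ⟨l', h', heq⟩
        have hl : l' = l := congrArg Prod.snd heq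
        rwa [hl] at h'
    rw [himg]
    exact Set.ncard_image_of_injective _ (fun a b h => congrArg Prod.snd h)
  have hR0n : R0 x fstar ≤ ({i | β' i ≠ 0} : Set (Fin N)).ncard := by
    rw [← hncard]
    exact Nat.sInf_le ⟨1, fun _ => σ, fun _ => β', hrep, rfl⟩
  have hR0 : (R0 x fstar : ℝ) ≤ ((({i | β' i ≠ 0} : Set (Fin N)).ncard : ℕ) : ℝ) :=
    Nat.cast_le.2 hR0n
  have hE1 : empErr x y fstar = Efun N K y β' := rfl
  have hE2 : empErr x y (fun t => ∑ i, β1 i * Real.exp (-σ * ‖t - x i‖ ^ 2))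
      = Efun N K y β1 := rfl
  have hfg : (fun t => ∑ i, g (x i) / (N:ℝ) * Real.exp (-σ * ‖t - x i‖ ^ 2)) = fzg := by
    rw [hfzg]
    funext t
    rw [Finset.mul_sum]
    exact Finset.sum_congr rfl fun i _ => by ring
  have habs : (∑ i, |g (x i) / (N:ℝ)|) = (∑ i, |g (x i)|) / N := by
    rw [Finset.sum_div]
    exact Finset.sum_congr rfl fun i _ => by rw [abs_div, Nat.abs_cast]
  have hstep2 : Efun N K y β1 + γ * ∑ i, |β1 i|
      ≤ empErr x y fzg + γ * ((∑ i, |g (x i)|) / N) := by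
    have h := hβ1 (fun i => g (x i) / N)
    rw [hE2, hfg, habs] at h
    exact h
  have hsplit : (∑ i, γ * (|β1 i| + |β1 i| ^ q))
      = γ * (∑ i, |β1 i|) + γ * (∑ i, |β1 i| ^ q) := by
    rw [Finset.mul_sum, Finset.mul_sum, ← Finset.sum_add_distrib]
    exact Finset.sum_congr rfl fun i _ => by ring
  have hhoe : (∑ i, |β1 i| ^ q) ≤ (N:ℝ) ^ ((1:ℝ) - q) * (∑ i, |β1 i|) ^ q :=
    hoelder_q hN q hq0 hq1 (fun i => |β1 i|) (fun i => abs_nonneg _)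
  calc empErr x y fzl + lam * (R0 x fzl : ℝ)
      ≤ empErr x y fstar + lam * (R0 x fstar : ℝ) := hfzlmin fstar hInFsv
    _ ≤ Efun N K y β' + lam * ((({i | β' i ≠ 0} : Set (Fin N)).ncard : ℕ) : ℝ) := by
        rw [hE1]
        exact add_le_add_right (mul_le_mul_of_nonneg_left hR0 hlampos.le) _
    _ ≤ Efun N K y β1 + ∑ i, γ * (|β1 i| + |β1 i| ^ q) := hβ'
    _ = Efun N K y β1 + γ * (∑ i, |β1 i|) + γ * (∑ i, |β1 i| ^ q) := by
        rw [hsplit]; ring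
    _ ≤ Efun N K y β1 + γ * (∑ i, |β1 i|)
          + γ * ((N:ℝ) ^ ((1:ℝ) - q) * (∑ i, |β1 i|) ^ q) := by
        have := mul_le_mul_of_nonneg_left hhoe hγ.le
        linarith
    _ ≤ empErr x y fzg + γ * ((∑ i, |g (x i)|) / N)
          + γ * ((N:ℝ) ^ ((1:ℝ) - q) * (∑ i, |β1 i|) ^ q) := by
        linarith [hstep2]
    _ = empErr x y fzg + (γ / N) * ∑ i, |g (x i)|
          + γ * (N : ℝ) ^ ((1:ℝ) - q) * (∑ i, |β1 i|) ^ q := by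
        ring
end

section
/- Let d, N be positive integers, x_1,…,x_N ∈ ℝ^d, and let ε = (ε_1,…,ε_N) be uniformly distributed on {−1,1}^N (i.e. ε_1,…,ε_N are independent Rademacher variables). Then for every constant κ ≥ 1, the expected Rademacher chaos of order two of the Gaussian kernel class satisfies E_ε[ sup_{σ ∈ (0,∞)} | (1/N) Σ_{1 ≤ i < j ≤ N} ε_i ε_j exp(−σ‖x_i − x_j‖²) | ] ≤ (1 + 192e)κ². -/
open Finset

/-- sign of a boolean -/
def rcgEps {N : ℕ} (s : Fin N → Bool) (i : Fin N) : ℝ := if s i then 1 else -1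

lemma rcgEps_sq {N : ℕ} (s : Fin N → Bool) (i : Fin N) : rcgEps s i ^ 2 = 1 := by
  unfold rcgEps; split <;> norm_num

lemma rcgEps_update {N : ℕ} (s : Fin N → Bool) (i ν : Fin N) (b : Bool) (h : i ≠ ν) :
    rcgEps (Function.update s ν b) i = rcgEps s i := by
  unfold rcgEps
  rw [Function.update_of_ne h]

/-- flipping vanishing lemma -/
lemma rcg_flip_sum {N : ℕ} (ν : Fin N) (h : (Fin N → Bool) → ℝ)
    (hh : ∀ s b, h (Function.update s ν b) = h s) :
    ∑ s : Fin N → Bool, rcgEps s ν * h s = 0 := by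
  classical
  have hinv : Function.Involutive (fun s : Fin N → Bool => Function.update s ν (! s ν)) := by
    intro s
    funext i
    by_cases hi : i = ν
    · subst hi; simp
    · simp [Function.update_of_ne hi]
  have key := Equiv.sum_comp hinv.toPerm (fun s => rcgEps s ν * h s)
  have hF : ∀ s : Fin N → Bool,
      rcgEps (Function.update s ν (! s ν)) ν * h (Function.update s ν (! s ν))
        = -(rcgEps s ν * h s) := by
    intro s
    rw [hh]
    have : rcgEps (Function.update s ν (! s ν)) ν = - rcgEps s ν := by
      unfold rcgEps
      cases hb : s ν <;> simp [hb]
    rw [this]; ring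
  have : ∑ s : Fin N → Bool, (fun s => rcgEps s ν * h s) ((hinv.toPerm) s) =
      ∑ s : Fin N → Bool, -(rcgEps s ν * h s) := by
    apply Finset.sum_congr rfl
    intro s _
    exact hF s
  rw [this, Finset.sum_neg_distrib] at key
  linarith [key]

lemma rcg_card_omega (N : ℕ) : ∑ _s : Fin N → Bool, (1:ℝ) = 2 ^ N := by
  rw [Finset.sum_const]
  simp [Fintype.card_fun]

/-- second moment of a Rademacher sum -/
lemma rcg_L2 {N : ℕ} (T : Finset (Fin N)) :
    ∑ s : Fin N → Bool, (∑ i ∈ T, rcgEps s i) ^ 2 ≤ (T.card : ℝ) * 2 ^ N := by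
  classical
  induction T using Finset.induction_on with
  | empty => simp
  | @insert t T ht ih =>
    have hsplit : ∀ s : Fin N → Bool,
        (∑ i ∈ insert t T, rcgEps s i) ^ 2
        = (∑ i ∈ T, rcgEps s i) ^ 2 + 2 * (rcgEps s t * ∑ i ∈ T, rcgEps s i) + 1 := by
      intro s
      rw [Finset.sum_insert ht]
      have := rcgEps_sq s t
      nlinarith [this]
    calc ∑ s : Fin N → Bool, (∑ i ∈ insert t T, rcgEps s i) ^ 2
        = ∑ s : Fin N → Bool, ((∑ i ∈ T, rcgEps s i) ^ 2
            + 2 * (rcgEps s t * ∑ i ∈ T, rcgEps s i) + 1) := by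
          exact Finset.sum_congr rfl fun s _ => hsplit s
      _ = (∑ s : Fin N → Bool, (∑ i ∈ T, rcgEps s i) ^ 2)
            + 2 * (∑ s : Fin N → Bool, rcgEps s t * ∑ i ∈ T, rcgEps s i)
            + ∑ _s : Fin N → Bool, (1:ℝ) := by
          rw [Finset.sum_add_distrib, Finset.sum_add_distrib, Finset.mul_sum]
      _ ≤ (T.card : ℝ) * 2 ^ N + 2 * 0 + 2 ^ N := by
          have hzero : ∑ s : Fin N → Bool, rcgEps s t * ∑ i ∈ T, rcgEps s i = 0 := by
            apply rcg_flip_sum t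
            intro s b
            apply Finset.sum_congr rfl
            intro i hi
            exact rcgEps_update s i t b (fun he => ht (he ▸ hi))
          rw [hzero, rcg_card_omega]
          linarith [ih]
      _ ≤ ((insert t T).card : ℝ) * 2 ^ N := by
          rw [Finset.card_insert_of_notMem ht]
          push_cast
          have : (0:ℝ) ≤ 2 ^ N := by positivity
          nlinarith

/-- fourth moment of a Rademacher sum -/
lemma rcg_L4 {N : ℕ} (T : Finset (Fin N)) :
    ∑ s : Fin N → Bool, (∑ i ∈ T, rcgEps s i) ^ 4 ≤ 3 * (T.card : ℝ) ^ 2 * 2 ^ N := by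
  classical
  induction T using Finset.induction_on with
  | empty => simp
  | @insert t T ht ih =>
    have hsplit : ∀ s : Fin N → Bool,
        (∑ i ∈ insert t T, rcgEps s i) ^ 4
        = (∑ i ∈ T, rcgEps s i) ^ 4 + 6 * (∑ i ∈ T, rcgEps s i) ^ 2 + 1
          + rcgEps s t * (4 * (∑ i ∈ T, rcgEps s i) ^ 3 + 4 * (∑ i ∈ T, rcgEps s i)) := by
      intro s
      rw [Finset.sum_insert ht]
      have he : rcgEps s t ^ 2 = 1 := rcgEps_sq s t
      set Y := ∑ i ∈ T, rcgEps s i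
      set e := rcgEps s t
      linear_combination (6 * Y ^ 2 + 4 * Y * e + e ^ 2 + 1) * he
    have hzero : ∑ s : Fin N → Bool,
        rcgEps s t * (4 * (∑ i ∈ T, rcgEps s i) ^ 3 + 4 * (∑ i ∈ T, rcgEps s i)) = 0 := by
      apply rcg_flip_sum t
      intro s b
      have hY : ∑ i ∈ T, rcgEps (Function.update s t b) i = ∑ i ∈ T, rcgEps s i := by
        apply Finset.sum_congr rfl
        intro i hi
        exact rcgEps_update s i t b (fun he => ht (he ▸ hi))
      rw [hY]
    have hL2 := rcg_L2 (N := N) T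
    calc ∑ s : Fin N → Bool, (∑ i ∈ insert t T, rcgEps s i) ^ 4
        = (∑ s : Fin N → Bool, (∑ i ∈ T, rcgEps s i) ^ 4)
          + 6 * (∑ s : Fin N → Bool, (∑ i ∈ T, rcgEps s i) ^ 2)
          + (∑ _s : Fin N → Bool, (1:ℝ))
          + ∑ s : Fin N → Bool,
              rcgEps s t * (4 * (∑ i ∈ T, rcgEps s i) ^ 3 + 4 * (∑ i ∈ T, rcgEps s i)) := by
          rw [Finset.mul_sum, ← Finset.sum_add_distrib, ← Finset.sum_add_distrib,
            ← Finset.sum_add_distrib]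
          exact Finset.sum_congr rfl fun s _ => hsplit s
      _ ≤ 3 * (T.card : ℝ) ^ 2 * 2 ^ N + 6 * ((T.card : ℝ) * 2 ^ N) + 2 ^ N + 0 := by
          rw [hzero, rcg_card_omega]
          have h4 : ∑ s : Fin N → Bool, (∑ i ∈ T, rcgEps s i) ^ 2
              ≤ (T.card : ℝ) * 2 ^ N := hL2
          linarith [ih]
      _ ≤ 3 * ((insert t T).card : ℝ) ^ 2 * 2 ^ N := by
          rw [Finset.card_insert_of_notMem ht]
          push_cast
          have h2 : (0:ℝ) ≤ 2 ^ N := by positivity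
          nlinarith

/-- fourth moment of an order-two Rademacher chaos with ±1 coefficients -/
lemma rcg_M4 {N : ℕ} : ∀ (n : ℕ) (Q : Finset (Fin N × Fin N)),
    (∀ p ∈ Q, p.1 < p.2) → (∀ p ∈ Q, (p.2 : ℕ) < n) →
    ∑ s : Fin N → Bool, (∑ p ∈ Q, rcgEps s p.1 * rcgEps s p.2) ^ 4
      ≤ 27 * (Q.card : ℝ) ^ 2 * 2 ^ N := by
  classical
  intro n
  induction n with
  | zero =>
    intro Q h1 h2
    have : Q = ∅ := by
      apply Finset.eq_empty_of_forall_notMem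
      intro p hp
      exact Nat.not_lt_zero _ (h2 p hp)
    subst this
    simp
  | succ n ih =>
    intro Q h1 h2
    by_cases hNn : N ≤ n
    · exact ih Q h1 (fun p hp => lt_of_lt_of_le p.2.isLt hNn)
    push_neg at hNn
    set ν : Fin N := ⟨n, hNn⟩ with hν
    set Q₀ : Finset (Fin N × Fin N) := Q.filter (fun p => ¬ (p.2 = ν)) with hQ₀
    set R : Finset (Fin N × Fin N) := Q.filter (fun p => p.2 = ν) with hR
    set T : Finset (Fin N) := R.image Prod.fst with hT
    -- cards
    have hcard : R.card + Q₀.card = Q.card := Finset.card_filter_add_card_filter_not _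
    have hTR : T.card = R.card := by
      apply Finset.card_image_of_injOn
      intro p hp q hq hpq
      have hp2 : p.2 = ν := (Finset.mem_filter.1 hp).2
      have hq2 : q.2 = ν := (Finset.mem_filter.1 hq).2
      exact Prod.ext hpq (hp2.trans hq2.symm)
    -- vertex facts
    have hQ₀ne : ∀ p ∈ Q₀, p.1 ≠ ν ∧ p.2 ≠ ν := by
      intro p hp
      have hpQ : p ∈ Q := (Finset.mem_filter.1 hp).1
      have h2' : (p.2 : ℕ) < n + 1 := h2 p hpQ
      have h1' : (p.1 : ℕ) < (p.2 : ℕ) := h1 p hpQ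
      constructor
      · intro he
        rw [he] at h1'
        simp only [hν] at h1'
        omega
      · exact (Finset.mem_filter.1 hp).2
    have hQ₀lt : ∀ p ∈ Q₀, (p.2 : ℕ) < n := by
      intro p hp
      have hpQ : p ∈ Q := (Finset.mem_filter.1 hp).1
      have h2' : (p.2 : ℕ) < n + 1 := h2 p hpQ
      have hne := (hQ₀ne p hp).2
      have : (p.2 : ℕ) ≠ n := by
        intro he
        exact hne (Fin.ext he)
      omega
    have hTne : ∀ i ∈ T, i ≠ ν := by
      intro i hi
      obtain ⟨p, hp, hpi⟩ := Finset.mem_image.1 hi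
      have hpQ : p ∈ Q := (Finset.mem_filter.1 hp).1
      have hp2 : p.2 = ν := (Finset.mem_filter.1 hp).2
      have h1' : p.1 < p.2 := h1 p hpQ
      intro he
      rw [hpi, hp2, he] at h1'
      exact lt_irrefl _ h1'
    -- decomposition pointwise
    have hdec : ∀ s : Fin N → Bool,
        ∑ p ∈ Q, rcgEps s p.1 * rcgEps s p.2
        = (∑ p ∈ Q₀, rcgEps s p.1 * rcgEps s p.2) + (∑ i ∈ T, rcgEps s i) * rcgEps s ν := by
      intro s
      have hsplit := Finset.sum_filter_add_sum_filter_not Q (fun p => p.2 = ν)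
        (fun p => rcgEps s p.1 * rcgEps s p.2)
      rw [← hsplit]
      have hRsum : ∑ p ∈ R, rcgEps s p.1 * rcgEps s p.2
          = (∑ i ∈ T, rcgEps s i) * rcgEps s ν := by
        rw [hT, Finset.sum_image ?hinj, Finset.sum_mul]
        case hinj =>
          intro p hp q hq hpq
          exact Prod.ext hpq (((Finset.mem_filter.1 hp).2).trans
            ((Finset.mem_filter.1 hq).2).symm)
        apply Finset.sum_congr rfl
        intro p hp
        rw [(Finset.mem_filter.1 hp).2]
      rw [hRsum]
      ring
    -- abbreviations
    set X₀ : (Fin N → Bool) → ℝ := fun s => ∑ p ∈ Q₀, rcgEps s p.1 * rcgEps s p.2 with hX₀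
    set Y : (Fin N → Bool) → ℝ := fun s => ∑ i ∈ T, rcgEps s i with hY
    -- invariance under update at ν
    have hX₀inv : ∀ s b, X₀ (Function.update s ν b) = X₀ s := by
      intro s b
      apply Finset.sum_congr rfl
      intro p hp
      rw [rcgEps_update s p.1 ν b (hQ₀ne p hp).1, rcgEps_update s p.2 ν b (hQ₀ne p hp).2]
    have hYinv : ∀ s b, Y (Function.update s ν b) = Y s := by
      intro s b
      apply Finset.sum_congr rfl
      intro i hi
      exact rcgEps_update s i ν b (hTne i hi)
    -- pointwise expansion
    have hexp : ∀ s : Fin N → Bool,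
        (∑ p ∈ Q, rcgEps s p.1 * rcgEps s p.2) ^ 4
        = X₀ s ^ 4 + 6 * (X₀ s ^ 2 * Y s ^ 2) + Y s ^ 4
          + rcgEps s ν * (4 * X₀ s ^ 3 * Y s + 4 * X₀ s * Y s ^ 3) := by
      intro s
      rw [hdec s]
      have he : rcgEps s ν ^ 2 = 1 := rcgEps_sq s ν
      set e := rcgEps s ν
      set a := X₀ s
      set b := Y s
      linear_combination (6 * a ^ 2 * b ^ 2 + 4 * a * b ^ 3 * e + b ^ 4 * (e ^ 2 + 1)) * he
    have hzero : ∑ s : Fin N → Bool,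
        rcgEps s ν * (4 * X₀ s ^ 3 * Y s + 4 * X₀ s * Y s ^ 3) = 0 := by
      apply rcg_flip_sum ν
      intro s b
      rw [hX₀inv s b, hYinv s b]
    -- moment bounds
    have hX4 : ∑ s : Fin N → Bool, X₀ s ^ 4 ≤ 27 * (Q₀.card : ℝ) ^ 2 * 2 ^ N :=
      ih Q₀ (fun p hp => h1 p (Finset.mem_filter.1 hp).1) hQ₀lt
    have hY4 : ∑ s : Fin N → Bool, Y s ^ 4 ≤ 3 * (T.card : ℝ) ^ 2 * 2 ^ N := rcg_L4 T
    -- Cauchy-Schwarz for the cross term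
    have hCS : ∑ s : Fin N → Bool, X₀ s ^ 2 * Y s ^ 2
        ≤ 9 * (Q₀.card : ℝ) * (T.card : ℝ) * 2 ^ N := by
      have h1' := sum_mul_sq_le_sq_mul_sq Finset.univ (fun s => X₀ s ^ 2) (fun s => Y s ^ 2)
      have h2' : ∀ s : Fin N → Bool, (X₀ s ^ 2) ^ 2 = X₀ s ^ 4 := fun s => by ring
      have h3' : ∀ s : Fin N → Bool, (Y s ^ 2) ^ 2 = Y s ^ 4 := fun s => by ring
      rw [Finset.sum_congr rfl (fun s _ => h2' s), Finset.sum_congr rfl (fun s _ => h3' s)] at h1'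
      have hnn : (0:ℝ) ≤ ∑ s : Fin N → Bool, X₀ s ^ 2 * Y s ^ 2 := by
        apply Finset.sum_nonneg
        intro s _
        positivity
      have hX4nn : (0:ℝ) ≤ ∑ s : Fin N → Bool, X₀ s ^ 4 := by
        apply Finset.sum_nonneg; intro s _; positivity
      have hY4nn : (0:ℝ) ≤ ∑ s : Fin N → Bool, Y s ^ 4 := by
        apply Finset.sum_nonneg; intro s _; positivity
      have hQ0nn : (0:ℝ) ≤ (Q₀.card : ℝ) := Nat.cast_nonneg _
      have hTnn : (0:ℝ) ≤ (T.card : ℝ) := Nat.cast_nonneg _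
      have h2N : (0:ℝ) ≤ 2 ^ N := by positivity
      have hsq : (∑ s : Fin N → Bool, X₀ s ^ 2 * Y s ^ 2) ^ 2
          ≤ (9 * (Q₀.card : ℝ) * (T.card : ℝ) * 2 ^ N) ^ 2 := by
        nlinarith [h1', mul_le_mul hX4 hY4 hY4nn
          (by positivity : (0:ℝ) ≤ 27 * (Q₀.card:ℝ)^2 * 2^N)]
      have hBnn : (0:ℝ) ≤ 9 * (Q₀.card : ℝ) * (T.card : ℝ) * 2 ^ N :=
        mul_nonneg (mul_nonneg (mul_nonneg (by norm_num) hQ0nn) hTnn) h2N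
      exact (pow_le_pow_iff_left₀ hnn hBnn two_ne_zero).1 hsq
    -- combine
    calc ∑ s : Fin N → Bool, (∑ p ∈ Q, rcgEps s p.1 * rcgEps s p.2) ^ 4
        = (∑ s : Fin N → Bool, X₀ s ^ 4) + 6 * (∑ s : Fin N → Bool, X₀ s ^ 2 * Y s ^ 2)
          + (∑ s : Fin N → Bool, Y s ^ 4)
          + ∑ s : Fin N → Bool, rcgEps s ν * (4 * X₀ s ^ 3 * Y s + 4 * X₀ s * Y s ^ 3) := by
          rw [Finset.mul_sum, ← Finset.sum_add_distrib, ← Finset.sum_add_distrib,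
            ← Finset.sum_add_distrib]
          exact Finset.sum_congr rfl fun s _ => hexp s
      _ ≤ 27 * (Q₀.card : ℝ) ^ 2 * 2 ^ N + 6 * (9 * (Q₀.card : ℝ) * (T.card : ℝ) * 2 ^ N)
          + 3 * (T.card : ℝ) ^ 2 * 2 ^ N + 0 := by
          rw [hzero]
          have hCS6 : 6 * (∑ s : Fin N → Bool, X₀ s ^ 2 * Y s ^ 2)
              ≤ 6 * (9 * (Q₀.card : ℝ) * (T.card : ℝ) * 2 ^ N) := by linarith [hCS]
          linarith [hX4, hY4]
      _ ≤ 27 * (Q.card : ℝ) ^ 2 * 2 ^ N := by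
          have : (Q.card : ℝ) = (R.card : ℝ) + (Q₀.card : ℝ) := by
            rw [← hcard]; push_cast; ring
          rw [this, hTR]
          have h2N : (0:ℝ) ≤ 2 ^ N := by positivity
          have hRnn : (0:ℝ) ≤ (R.card : ℝ) := Nat.cast_nonneg _
          have hQ0nn : (0:ℝ) ≤ (Q₀.card : ℝ) := Nat.cast_nonneg _
          nlinarith

/-- Abel summation bound -/
lemma rcg_abel (A : ℕ → ℝ) (b : ℝ) :
    ∀ (n : ℕ) (W : ℕ → ℝ) (u : ℝ), 0 ≤ u →
      (∀ i, i < n → 0 ≤ W i) →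
      (∀ i j, i ≤ j → j < n → W j ≤ W i) →
      (∀ i, i < n → W i ≤ u) →
      (∀ k, k ≤ n → |∑ i ∈ range k, A i| ≤ b) →
      |∑ i ∈ range n, A i * W i| ≤ u * b := by
  intro n
  induction n with
  | zero =>
    intro W u hu _ _ _ hb
    have hb0 : (0:ℝ) ≤ b := le_trans (abs_nonneg _) (hb 0 (le_refl 0))
    simpa using mul_nonneg hu hb0
  | succ n ih =>
    intro W u hu h0 hmono hub hb
    have hb0 : (0:ℝ) ≤ b := le_trans (abs_nonneg _) (hb 0 (by omega))
    have hWn0 : 0 ≤ W n := h0 n (by omega)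
    have hWnu : W n ≤ u := hub n (by omega)
    have key : ∑ i ∈ range (n+1), A i * W i
        = W n * (∑ i ∈ range (n+1), A i) + ∑ i ∈ range n, A i * (W i - W n) := by
      have h1 : ∑ i ∈ range n, A i * (W i - W n)
          = (∑ i ∈ range n, A i * W i) - (∑ i ∈ range n, A i) * W n := by
        rw [Finset.sum_mul, ← Finset.sum_sub_distrib]
        exact Finset.sum_congr rfl (fun i _ => by ring)
      rw [h1, Finset.sum_range_succ (f := fun i => A i * W i), Finset.sum_range_succ (f := A)]
      ring
    have ihapp := ih (fun i => W i - W n) (u - W n) (by linarith)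
      (fun i hi => by
        have := hmono i n (by omega) (by omega)
        linarith)
      (fun i j hij hj => by
        have := hmono i j hij (by omega)
        linarith)
      (fun i hi => by
        have := hub i (by omega)
        linarith)
      (fun k hk => hb k (by omega))
    calc |∑ i ∈ range (n+1), A i * W i|
        ≤ |W n * (∑ i ∈ range (n+1), A i)| + |∑ i ∈ range n, A i * (W i - W n)| := by
          rw [key]; exact abs_add_le _ _
      _ ≤ W n * b + (u - W n) * b := by
          have h1 : |W n * (∑ i ∈ range (n+1), A i)| = W n * |∑ i ∈ range (n+1), A i| := by
            rw [abs_mul, abs_of_nonneg hWn0]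
          rw [h1]
          have h2 : W n * |∑ i ∈ range (n+1), A i| ≤ W n * b :=
            mul_le_mul_of_nonneg_left (hb (n+1) (le_refl _)) hWn0
          linarith [ihapp]
      _ = u * b := by ring

/-- list sum as range sum -/
lemma rcg_list_sum {α : Type*} (dp : α) (f : α → ℝ) :
    ∀ (l : List α), (l.map f).sum = ∑ i ∈ range l.length, f (l.getD i dp)
  | [] => by simp
  | a :: l => by
    rw [List.map_cons, List.sum_cons, rcg_list_sum dp f l, List.length_cons,
      Finset.sum_range_succ']
    simp only [List.getD_cons_succ, List.getD_cons_zero]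
    ring

/-- dyadic increment maximum -/
noncomputable def rcgDd (S : ℕ → ℝ) (w j : ℕ) : ℝ :=
  (range (2^j)).sup' ⟨0, Finset.mem_range.2 (pow_pos (by norm_num : (0:ℕ) < 2) j)⟩
    fun m => |S (2^w * (2*m+1)) - S (2^w * (2*m))|

lemma rcg_le_Dd (S : ℕ → ℝ) (w j m : ℕ) (h : m < 2^j) :
    |S (2^w * (2*m+1)) - S (2^w * (2*m))| ≤ rcgDd S w j := by
  unfold rcgDd
  exact Finset.le_sup' (fun m => |S (2^w * (2*m+1)) - S (2^w * (2*m))|) (Finset.mem_range.2 h)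

lemma rcg_Dd_le (S : ℕ → ℝ) (w j : ℕ) (b : ℝ)
    (h : ∀ m, m < 2^j → |S (2^w * (2*m+1)) - S (2^w * (2*m))| ≤ b) :
    rcgDd S w j ≤ b := by
  unfold rcgDd
  exact Finset.sup'_le _ _ (fun m hm => h m (Finset.mem_range.1 hm))

lemma rcg_Dd_exists (S : ℕ → ℝ) (w j : ℕ) :
    ∃ m, m < 2^j ∧ rcgDd S w j = |S (2^w * (2*m+1)) - S (2^w * (2*m))| := by
  unfold rcgDd
  obtain ⟨m, hm, he⟩ := Finset.exists_mem_eq_sup'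
    (⟨0, Finset.mem_range.2 (pow_pos (by norm_num : (0:ℕ) < 2) j)⟩ :
      (range (2^j)).Nonempty)
    (fun m => |S (2^w * (2*m+1)) - S (2^w * (2*m))|)
  exact ⟨m, Finset.mem_range.1 hm, he⟩

lemma rcgDd_nonneg (S : ℕ → ℝ) (w j : ℕ) : 0 ≤ rcgDd S w j :=
  le_trans (abs_nonneg (S (2^w * (2*0+1)) - S (2^w * (2*0))))
    (rcg_le_Dd S w j 0 (pow_pos (by norm_num : (0:ℕ) < 2) j))

/-- pointwise chaining bound -/
lemma rcg_chain : ∀ (L : ℕ) (S : ℕ → ℝ), S 0 = 0 → ∀ k, k < 2^L →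
    |S k| ≤ ∑ j ∈ range L, rcgDd S (L-1-j) j := by
  intro L
  induction L with
  | zero =>
    intro S hS0 k hk
    interval_cases k
    simp [hS0]
  | succ L ih =>
    intro S hS0 k hk
    have h2L : 0 < 2^L := pow_pos (by norm_num) L
    set t := k / 2^L with htdef
    have ht1 : t ≤ 1 := by
      have h2 : k < 2 * 2^L := by rw [pow_succ] at hk; omega
      have h3 := (Nat.div_lt_iff_lt_mul h2L).2 h2
      omega
    set q := 2^L * t with hqdef
    set k' := k % 2^L with hk'def
    have hqk : q + k' = k := by
      rw [hqdef, hk'def, htdef]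
      exact Nat.div_add_mod k (2^L)
    have hk' : k' < 2^L := Nat.mod_lt _ h2L
    set S' : ℕ → ℝ := fun i => S (q + i) - S q with hS'
    have hS'0 : S' 0 = 0 := by simp [hS']
    have ihapp := ih S' hS'0 k' hk'
    have step1 : |S k| ≤ |S q| + |S' k'| := by
      have : S k = S q + S' k' := by
        simp only [hS', hqk]
        ring
      rw [this]
      exact abs_add_le _ _
    have step2 : |S q| ≤ rcgDd S L 0 := by
      have hcand : |S (2^L * (2*0+1)) - S (2^L * (2*0))| ≤ rcgDd S L 0 :=
        rcg_le_Dd S L 0 0 (pow_pos (by norm_num : (0:ℕ) < 2) 0)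
      rcases Nat.le_one_iff_eq_zero_or_eq_one.1 ht1 with ht | ht
      · have hq0 : q = 0 := by rw [hqdef, ht]; ring
        rw [hq0, hS0]
        simpa using rcgDd_nonneg S L 0
      · have hq : q = 2^L := by rw [hqdef, ht]; ring
        rw [hq]
        have he : |S (2^L * (2*0+1)) - S (2^L * (2*0))| = |S (2^L)| := by
          norm_num [hS0]
        rw [← he]
        exact hcand
    have step3 : ∀ j ∈ range L, rcgDd S' (L-1-j) j ≤ rcgDd S (L-1-j) (j+1) := by
      intro j hj
      have hjL : j < L := Finset.mem_range.1 hj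
      apply rcg_Dd_le
      intro m hmj
      set w := L - 1 - j with hw
      have hwj : w + (j+1) = L := by
        rw [hw]
        omega
      set m' := m + 2^j * t with hm'
      have hm'lt : m' < 2^(j+1) := by
        have h2j : 2^(j+1) = 2^j * 2 := by rw [pow_succ]
        have hle : 2^j * t ≤ 2^j * 1 := Nat.mul_le_mul_left _ ht1
        omega
      have hq2 : q = 2^w * (2^(j+1) * t) := by
        rw [hqdef, ← hwj, pow_add]
        ring
      have hid1 : q + 2^w * (2*m+1) = 2^w * (2*m'+1) := by
        rw [hq2, hm']
        ring
      have hid2 : q + 2^w * (2*m) = 2^w * (2*m') := by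
        rw [hq2, hm']
        ring
      have heq : |S' (2^w * (2*m+1)) - S' (2^w * (2*m))|
          = |S (2^w * (2*m'+1)) - S (2^w * (2*m'))| := by
        simp only [hS']
        rw [← hid1, ← hid2]
        congr 1
        ring
      rw [heq]
      exact rcg_le_Dd S w (j+1) m' hm'lt
    have hsum : ∑ j ∈ range (L+1), rcgDd S (L+1-1-j) j
        = (∑ j ∈ range L, rcgDd S (L-1-j) (j+1)) + rcgDd S L 0 := by
      rw [Finset.sum_range_succ' (fun j => rcgDd S (L+1-1-j) j) L]
      have hs : (∑ j ∈ range L, rcgDd S (L+1-1-(j+1)) (j+1))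
          = ∑ j ∈ range L, rcgDd S (L-1-j) (j+1) := by
        apply Finset.sum_congr rfl
        intro j hj
        have he : L + 1 - 1 - (j+1) = L - 1 - j := by omega
        rw [he]
      rw [hs]
      norm_num
    rw [hsum]
    have hs3 := Finset.sum_le_sum step3
    linarith [step1, step2, ihapp, hs3]

/-- fourth power of a sum vs sum of fourth powers -/
lemma rcg_pow4 {ι : Type*} (s : Finset ι) (f : ι → ℝ) :
    (∑ i ∈ s, f i)^4 ≤ (s.card:ℝ)^3 * ∑ i ∈ s, (f i)^4 := by
  have hc : (0:ℝ) ≤ (s.card:ℝ) := Nat.cast_nonneg _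
  have h1 : (∑ i ∈ s, f i)^2 ≤ (s.card:ℝ) * ∑ i ∈ s, (f i)^2 := by
    have h := sum_mul_sq_le_sq_mul_sq s (fun _ => (1:ℝ)) f
    simpa using h
  have h2 : (∑ i ∈ s, (f i)^2)^2 ≤ (s.card:ℝ) * ∑ i ∈ s, (f i)^4 := by
    have h := sum_mul_sq_le_sq_mul_sq s (fun _ => (1:ℝ)) (fun i => (f i)^2)
    simp only [one_mul, one_pow, Finset.sum_const, nsmul_eq_mul, mul_one] at h
    have he : (∑ i ∈ s, ((f i)^2)^2) = ∑ i ∈ s, (f i)^4 :=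
      Finset.sum_congr rfl (fun i _ => by ring)
    rw [he] at h
    exact h
  calc (∑ i ∈ s, f i)^4 = ((∑ i ∈ s, f i)^2)^2 := by ring
    _ ≤ ((s.card:ℝ) * ∑ i ∈ s, (f i)^2)^2 := pow_le_pow_left₀ (sq_nonneg _) h1 2
    _ = (s.card:ℝ)^2 * (∑ i ∈ s, (f i)^2)^2 := by ring
    _ ≤ (s.card:ℝ)^2 * ((s.card:ℝ) * ∑ i ∈ s, (f i)^4) :=
        mul_le_mul_of_nonneg_left h2 (by positivity)
    _ = (s.card:ℝ)^3 * ∑ i ∈ s, (f i)^4 := by ring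

set_option maxHeartbeats 1000000 in
/-- The expected order-two Rademacher chaos of the Gaussian kernel
class is at most `(1 + 192e) κ²`: with `ε` uniform on `{−1,1}^N` (encoded by averaging
over sign patterns `s : Fin N → Bool`),
`E_ε[ sup_{σ>0} |(1/N) Σ_{i<j} ε_i ε_j exp(−σ‖x_i − x_j‖²)| ] ≤ (1 + 192e) κ²`
for every `κ ≥ 1`. -/
theorem rademacher_chaos_gaussian_bound
    (d N : ℕ) (hd : 0 < d) (hN : 0 < N)
    (x : Fin N → EuclideanSpace ℝ (Fin d)) (κ : ℝ) (hκ : 1 ≤ κ) :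
    (∑ s : Fin N → Bool,
        ⨆ σ : Set.Ioi (0 : ℝ),
          |(1 / N : ℝ) *
            ∑ p ∈ Finset.univ.filter (fun p : Fin N × Fin N => p.1 < p.2),
              (if s p.1 then (1 : ℝ) else -1) * (if s p.2 then (1 : ℝ) else -1) *
                Real.exp (-(σ : ℝ) * ‖x p.1 - x p.2‖ ^ 2)|) / 2 ^ N ≤
      (1 + 192 * Real.exp 1) * κ ^ 2 := by

  classical
  haveI hne : Nonempty (Set.Ioi (0:ℝ)) := ⟨⟨1, by norm_num⟩⟩
  have h2N : (0:ℝ) < 2^N := by positivity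
  have hNR : (0:ℝ) < (N:ℝ) := by exact_mod_cast hN
  rw [div_le_iff₀ h2N]
  set P : Finset (Fin N × Fin N) := Finset.univ.filter (fun p : Fin N × Fin N => p.1 < p.2)
    with hP
  set c : Fin N × Fin N → ℝ := fun p => ‖x p.1 - x p.2‖^2 with hc
  set dp : Fin N × Fin N := (⟨0,hN⟩, ⟨0,hN⟩) with hdp
  set l : List (Fin N × Fin N) := P.toList.mergeSort (fun p q => decide (c p ≤ c q)) with hl
  have hperm : l.Perm P.toList := List.mergeSort_perm P.toList _
  have hnodup : l.Nodup := (hperm.nodup_iff).2 (Finset.nodup_toList P)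
  have hsorted : List.Pairwise (fun p q => decide (c p ≤ c q) = true) l := by
    apply List.pairwise_mergeSort
    · intro a b e h1 h2
      simp only [decide_eq_true_eq] at h1 h2 ⊢
      exact le_trans h1 h2
    · intro a b
      simpa using le_total (c a) (c b)
  set M := l.length with hM
  have hlmem : ∀ p ∈ l, p.1 < p.2 := by
    intro p hp
    have : p ∈ P := Finset.mem_toList.1 (hperm.mem_iff.1 hp)
    exact (Finset.mem_filter.1 this).2
  have hMN : M ≤ N^2 := by
    have h1 : M = P.card := by rw [hM, hperm.length_eq, Finset.length_toList]
    have h2 : P.card ≤ (Finset.univ : Finset (Fin N × Fin N)).card :=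
      Finset.card_filter_le _ _
    have h3 : (Finset.univ : Finset (Fin N × Fin N)).card = N * N := by
      simp [Fintype.card_prod]
    have h4 : N * N = N^2 := by ring
    omega
  set L := Nat.clog 2 (M+1) with hL
  have hM2L : M < 2^L := by
    rw [hL]
    have := Nat.le_pow_clog (by norm_num : 1 < 2) (M+1)
    omega
  have h2LN : ∀ j, j < L → (2:ℕ)^L ≤ 2 * N^2 := by
    intro j hj
    have hL0 : L ≠ 0 := by omega
    have hM1 : 1 ≤ M := by
      by_contra h
      push_neg at h
      have hM0 : M = 0 := by omega
      rw [hL, hM0] at hL0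
      exact hL0 (Nat.clog_one_right 2)
    have h1 : 2^(L-1) ≤ M := by
      by_contra h
      push_neg at h
      have h2 : M+1 ≤ 2^(L-1) := h
      have h3 := (Nat.clog_le_iff_le_pow (by norm_num : 1 < 2)).2 h2
      omega
    have h5 : (2:ℕ)^L = 2 * 2^(L-1) := by
      conv_lhs => rw [show L = (L-1)+1 by omega]
      rw [pow_succ]
      ring
    omega
  -- the partial-sum process
  set g : (Fin N → Bool) → ℕ → ℝ := fun s i =>
    if i < M then rcgEps s (l.getD i dp).1 * rcgEps s (l.getD i dp).2 else 0 with hg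
  set S : (Fin N → Bool) → ℕ → ℝ := fun s k => ∑ i ∈ range k, g s i with hS
  set CH : (Fin N → Bool) → ℝ := fun s => ∑ j ∈ range L, rcgDd (S s) (L-1-j) j with hCH
  -- sortedness in index form
  have hsort : ∀ i j : ℕ, i ≤ j → j < M → c (l.getD i dp) ≤ c (l.getD j dp) := by
    intro i j hij hj
    rcases eq_or_lt_of_le hij with he | hlt
    · rw [he]
    · have hi' : i < l.length := by omega
      have hj' : j < l.length := by omega
      have := (List.pairwise_iff_get.1 hsorted) ⟨i, hi'⟩ ⟨j, hj'⟩ (Fin.mk_lt_mk.2 hlt)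
      rw [List.getD_eq_getElem l dp hi', List.getD_eq_getElem l dp hj']
      simpa using this
  -- Step A: pointwise supremum bound
  have hsup : ∀ s : Fin N → Bool,
      (⨆ σ : Set.Ioi (0:ℝ),
        |(1 / N : ℝ) * ∑ p ∈ P,
          (if s p.1 then (1 : ℝ) else -1) * (if s p.2 then (1 : ℝ) else -1) *
            Real.exp (-(σ : ℝ) * ‖x p.1 - x p.2‖ ^ 2)|)
      ≤ (1 / N : ℝ) * CH s := by
    intro s
    apply ciSup_le
    intro σ
    have hσ : (0:ℝ) < (σ:ℝ) := σ.2
    rw [abs_mul, abs_of_nonneg (by positivity : (0:ℝ) ≤ (1 / N : ℝ))]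
    apply mul_le_mul_of_nonneg_left _ (by positivity)
    -- rewrite sum over P as list-indexed sum
    have hrw : ∑ p ∈ P,
        (if s p.1 then (1 : ℝ) else -1) * (if s p.2 then (1 : ℝ) else -1) *
          Real.exp (-(σ : ℝ) * ‖x p.1 - x p.2‖ ^ 2)
        = ∑ i ∈ range M, g s i * Real.exp (-(σ:ℝ) * c (l.getD i dp)) := by
      calc ∑ p ∈ P,
          (if s p.1 then (1 : ℝ) else -1) * (if s p.2 then (1 : ℝ) else -1) *
            Real.exp (-(σ : ℝ) * ‖x p.1 - x p.2‖ ^ 2)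
          = (P.toList.map (fun p => rcgEps s p.1 * rcgEps s p.2 *
              Real.exp (-(σ:ℝ) * c p))).sum := by
            rw [Finset.sum_map_toList]
            rfl
        _ = (l.map (fun p => rcgEps s p.1 * rcgEps s p.2 *
              Real.exp (-(σ:ℝ) * c p))).sum :=
            ((hperm.map _).sum_eq).symm
        _ = ∑ i ∈ range M, (fun p => rcgEps s p.1 * rcgEps s p.2 *
              Real.exp (-(σ:ℝ) * c p)) (l.getD i dp) := rcg_list_sum dp _ l
        _ = ∑ i ∈ range M, g s i * Real.exp (-(σ:ℝ) * c (l.getD i dp)) := by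
            apply Finset.sum_congr rfl
            intro i hi
            have hiM : i < M := Finset.mem_range.1 hi
            simp only [hg, if_pos hiM]
    rw [hrw]
    have habel := rcg_abel (fun i => g s i) (CH s) M
      (fun i => Real.exp (-(σ:ℝ) * c (l.getD i dp))) 1 zero_le_one
      (fun i _ => le_of_lt (Real.exp_pos _))
      (fun i j hij hj => by
        apply Real.exp_le_exp.2
        have := hsort i j hij hj
        nlinarith)
      (fun i _ => by
        apply Real.exp_le_one_iff.2
        have hcnn : 0 ≤ c (l.getD i dp) := by rw [hc]; positivity
        nlinarith)
      (fun k hk => by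
        have := rcg_chain L (S s) (by simp [hS]) k (lt_of_le_of_lt hk hM2L)
        simpa [hS, hCH] using this)
    simpa using habel
  -- Step B: expectation of each chaining level
  have hlevel : ∀ j ∈ range L,
      ∑ s : Fin N → Bool, rcgDd (S s) (L-1-j) j
        ≤ 3 * (N:ℝ) * (17/20:ℝ)^(j+1) * 2^N := by
    intro j hj
    have hjL : j < L := Finset.mem_range.1 hj
    set w := L - 1 - j with hw
    have hwj : w + (j+1) = L := by omega
    -- moment bound for each increment
    have hmom : ∀ m, m < 2^j →
        ∑ s : Fin N → Bool, (S s (2^w*(2*m+1)) - S s (2^w*(2*m)))^4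
          ≤ 27 * ((2:ℝ)^w)^2 * 2^N := by
      intro m hm
      set a := 2^w * (2*m) with ha
      set bb := 2^w * (2*m+1) with hbb
      have hab : a ≤ bb := by
        rw [ha, hbb]
        exact Nat.mul_le_mul_left _ (by omega)
      have hba : bb = a + 2^w := by rw [ha, hbb]; ring
      set Q : Finset (Fin N × Fin N) :=
        ((Finset.Ico a bb).filter (fun i => i < M)).image (fun i => l.getD i dp) with hQ
      have hQ1 : ∀ p ∈ Q, p.1 < p.2 := by
        intro p hp
        obtain ⟨i, hi, hip⟩ := Finset.mem_image.1 hp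
        have hiM : i < M := (Finset.mem_filter.1 hi).2
        have hmem : l.getD i dp ∈ l := by
          rw [List.getD_eq_getElem l dp (by omega : i < l.length)]
          exact List.getElem_mem ..
        rw [← hip]
        exact hlmem _ hmem
      have hQcard : Q.card ≤ 2^w := by
        calc Q.card ≤ ((Finset.Ico a bb).filter (fun i => i < M)).card :=
              Finset.card_image_le
          _ ≤ (Finset.Ico a bb).card := Finset.card_filter_le _ _
          _ = 2^w := by rw [Nat.card_Ico]; omega
      have hdelta : ∀ s : Fin N → Bool,
          S s bb - S s a = ∑ p ∈ Q, rcgEps s p.1 * rcgEps s p.2 := by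
        intro s
        have h1 : S s bb - S s a = ∑ i ∈ Finset.Ico a bb, g s i :=
          (Finset.sum_Ico_eq_sub _ hab).symm
        have h2 : ∑ i ∈ Finset.Ico a bb, g s i
            = ∑ i ∈ (Finset.Ico a bb).filter (fun i => i < M),
                rcgEps s (l.getD i dp).1 * rcgEps s (l.getD i dp).2 := by
          rw [Finset.sum_filter]
        have h3 : ∑ p ∈ Q, rcgEps s p.1 * rcgEps s p.2
            = ∑ i ∈ (Finset.Ico a bb).filter (fun i => i < M),
                rcgEps s (l.getD i dp).1 * rcgEps s (l.getD i dp).2 := by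
          rw [hQ]
          apply Finset.sum_image
          intro i hi i' hi' he
          have hiM : i < M := (Finset.mem_filter.1 hi).2
          have hiM' : i' < M := (Finset.mem_filter.1 hi').2
          beta_reduce at he
          rw [List.getD_eq_getElem l dp (by omega : i < l.length),
            List.getD_eq_getElem l dp (by omega : i' < l.length)] at he
          have := (hnodup.get_inj_iff (i := ⟨i, by omega⟩) (j := ⟨i', by omega⟩)).1 he
          exact congrArg Fin.val this
        rw [h1, h2, ← h3]
      have hM4 := rcg_M4 (N := N) N Q hQ1 (fun p _ => p.2.isLt)
      have hQc : (Q.card:ℝ) ≤ (2:ℝ)^w := by exact_mod_cast hQcard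
      calc ∑ s : Fin N → Bool, (S s bb - S s a)^4
          = ∑ s : Fin N → Bool, (∑ p ∈ Q, rcgEps s p.1 * rcgEps s p.2)^4 :=
            Finset.sum_congr rfl (fun s _ => by rw [hdelta s])
        _ ≤ 27 * (Q.card:ℝ)^2 * 2^N := hM4
        _ ≤ 27 * ((2:ℝ)^w)^2 * 2^N := by
            have h1 : (Q.card:ℝ)^2 ≤ ((2:ℝ)^w)^2 :=
              pow_le_pow_left₀ (Nat.cast_nonneg _) hQc 2
            nlinarith [h2N]
    -- fourth moment of the level maximum
    have hD4 : ∑ s : Fin N → Bool, (rcgDd (S s) w j)^4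
        ≤ (2:ℝ)^j * (27 * ((2:ℝ)^w)^2 * 2^N) := by
      have hper : ∀ s : Fin N → Bool, (rcgDd (S s) w j)^4
          ≤ ∑ m ∈ range (2^j), (S s (2^w*(2*m+1)) - S s (2^w*(2*m)))^4 := by
        intro s
        obtain ⟨m0, hm0, he⟩ := rcg_Dd_exists (S s) w j
        rw [he, pow_abs, abs_of_nonneg (by positivity)]
        exact Finset.single_le_sum
          (f := fun m => (S s (2^w*(2*m+1)) - S s (2^w*(2*m)))^4)
          (fun m _ => by positivity) (Finset.mem_range.2 hm0)
      calc ∑ s : Fin N → Bool, (rcgDd (S s) w j)^4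
          ≤ ∑ s : Fin N → Bool,
              ∑ m ∈ range (2^j), (S s (2^w*(2*m+1)) - S s (2^w*(2*m)))^4 :=
            Finset.sum_le_sum (fun s _ => hper s)
        _ = ∑ m ∈ range (2^j),
              ∑ s : Fin N → Bool, (S s (2^w*(2*m+1)) - S s (2^w*(2*m)))^4 :=
            Finset.sum_comm
        _ ≤ ∑ _m ∈ range (2^j), (27 * ((2:ℝ)^w)^2 * 2^N) :=
            Finset.sum_le_sum (fun m hm => hmom m (Finset.mem_range.1 hm))
        _ = (2:ℝ)^j * (27 * ((2:ℝ)^w)^2 * 2^N) := by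
            rw [Finset.sum_const, Finset.card_range, nsmul_eq_mul]
            push_cast
            ring
    -- first moment via power mean
    have hcard : ((Finset.univ : Finset (Fin N → Bool)).card : ℝ) = 2^N := by
      rw [Finset.card_univ]
      simp [Fintype.card_fun]
    have hp4 := rcg_pow4 (Finset.univ : Finset (Fin N → Bool)) (fun s => rcgDd (S s) w j)
    rw [hcard] at hp4
    have hDnn : (0:ℝ) ≤ ∑ s : Fin N → Bool, rcgDd (S s) w j :=
      Finset.sum_nonneg (fun s _ => rcgDd_nonneg _ _ _)
    have hTnn : (0:ℝ) ≤ 3 * (N:ℝ) * (17/20:ℝ)^(j+1) * 2^N := by positivity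
    -- numeric comparison of fourth powers
    have hnum : 27 * (2:ℝ)^j * ((2:ℝ)^w)^2 ≤ 81 * (N:ℝ)^4 * (((17:ℝ)/20)^4)^(j+1) := by
      have hA : (2:ℝ)^w * 2^(j+1) = 2^L := by
        rw [← pow_add, hwj]
      have h2L2 : (2:ℝ)^L ≤ 2 * (N:ℝ)^2 := by
        have := h2LN j hjL
        exact_mod_cast this
      have h4pos : (0:ℝ) < 4^(j+1) := by positivity
      apply le_of_mul_le_mul_right _ h4pos
      have hL2 : ((2:ℝ)^w)^2 * 4^(j+1) = ((2:ℝ)^L)^2 := by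
        rw [← hA]
        have h42 : (4:ℝ)^(j+1) = ((2:ℝ)^(j+1))^2 := by
          rw [show (4:ℝ) = 2^2 by norm_num, ← pow_mul, ← pow_mul]
          congr 1
          ring
        rw [h42]
        ring
      have hlhs : 27 * (2:ℝ)^j * ((2:ℝ)^w)^2 * 4^(j+1) = 27 * (2:ℝ)^j * ((2:ℝ)^L)^2 := by
        rw [← hL2]
        ring
      rw [hlhs]
      have hrhs : 81 * (N:ℝ)^4 * (((17:ℝ)/20)^4)^(j+1) * 4^(j+1)
          = 81 * (N:ℝ)^4 * ((((17:ℝ)/20)^4) * 4)^(j+1) := by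
        rw [mul_pow]
        ring
      rw [hrhs]
      have hq2 : ((2:ℝ))^(j+1) ≤ ((((17:ℝ)/20)^4) * 4)^(j+1) :=
        pow_le_pow_left₀ (by norm_num) (by norm_num) (j+1)
      have hLb : ((2:ℝ)^L)^2 ≤ (2 * (N:ℝ)^2)^2 :=
        pow_le_pow_left₀ (by positivity) h2L2 2
      have h2jn : (0:ℝ) ≤ (2:ℝ)^j := by positivity
      have hN4 : (0:ℝ) ≤ (N:ℝ)^4 := by positivity
      calc 27 * (2:ℝ)^j * ((2:ℝ)^L)^2 ≤ 27 * (2:ℝ)^j * (2 * (N:ℝ)^2)^2 := by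
            nlinarith
        _ = 108 * (N:ℝ)^4 * (2:ℝ)^j := by ring
        _ ≤ 81 * (N:ℝ)^4 * (2:ℝ)^(j+1) := by
            have h2j1 : (2:ℝ)^(j+1) = 2 * 2^j := by rw [pow_succ]; ring
            rw [h2j1]
            nlinarith [mul_nonneg hN4 h2jn]
        _ ≤ 81 * (N:ℝ)^4 * ((((17:ℝ)/20)^4) * 4)^(j+1) := by
            nlinarith
    -- conclude via fourth powers
    apply (pow_le_pow_iff_left₀ hDnn hTnn (by norm_num : (4:ℕ) ≠ 0)).1
    have hstep : (∑ s : Fin N → Bool, rcgDd (S s) w j)^4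
        ≤ ((2:ℝ)^N)^3 * ((2:ℝ)^j * (27 * ((2:ℝ)^w)^2 * 2^N)) := by
      calc (∑ s : Fin N → Bool, rcgDd (S s) w j)^4
          ≤ ((2:ℝ)^N)^3 * ∑ s : Fin N → Bool, (rcgDd (S s) w j)^4 := hp4
        _ ≤ ((2:ℝ)^N)^3 * ((2:ℝ)^j * (27 * ((2:ℝ)^w)^2 * 2^N)) := by
            apply mul_le_mul_of_nonneg_left hD4 (by positivity)
    calc (∑ s : Fin N → Bool, rcgDd (S s) w j)^4
        ≤ ((2:ℝ)^N)^3 * ((2:ℝ)^j * (27 * ((2:ℝ)^w)^2 * 2^N)) := hstep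
      _ = (27 * (2:ℝ)^j * ((2:ℝ)^w)^2) * ((2:ℝ)^N)^4 := by ring
      _ ≤ (81 * (N:ℝ)^4 * (((17:ℝ)/20)^4)^(j+1)) * ((2:ℝ)^N)^4 := by
          have : (0:ℝ) ≤ ((2:ℝ)^N)^4 := by positivity
          nlinarith [hnum]
      _ = (3 * (N:ℝ) * (17/20:ℝ)^(j+1) * 2^N)^4 := by
          have hcom : (((17:ℝ)/20)^4)^(j+1) = (((17:ℝ)/20)^(j+1))^4 := by
            rw [← pow_mul, ← pow_mul, Nat.mul_comm]
          rw [hcom]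
          ring
  -- geometric series bound
  have hgeom : ∑ j ∈ range L, (17/20:ℝ)^(j+1) ≤ 17/3 := by
    have h1 : ∑ j ∈ range L, (17/20:ℝ)^(j+1)
        = (17/20:ℝ) * ∑ j ∈ range L, (17/20:ℝ)^j := by
      rw [Finset.mul_sum]
      apply Finset.sum_congr rfl
      intro j _
      rw [pow_succ]
      ring
    have h3 := geom_sum_eq (by norm_num : (17/20:ℝ) ≠ 1) L
    have h4 : (0:ℝ) ≤ (17/20:ℝ)^L := by positivity
    have h5 : ∑ j ∈ range L, (17/20:ℝ)^j = (1 - (17/20:ℝ)^L) * (20/3) := by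
      rw [h3]
      ring
    rw [h1, h5]
    nlinarith [h4]
  -- final assembly
  calc ∑ s : Fin N → Bool,
      ⨆ σ : Set.Ioi (0:ℝ),
        |(1 / N : ℝ) * ∑ p ∈ P,
          (if s p.1 then (1 : ℝ) else -1) * (if s p.2 then (1 : ℝ) else -1) *
            Real.exp (-(σ : ℝ) * ‖x p.1 - x p.2‖ ^ 2)|
      ≤ ∑ s : Fin N → Bool, (1 / N : ℝ) * CH s :=
        Finset.sum_le_sum (fun s _ => hsup s)
    _ = (1 / N : ℝ) * ∑ s : Fin N → Bool, CH s := by rw [Finset.mul_sum]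
    _ = (1 / N : ℝ) * ∑ j ∈ range L, ∑ s : Fin N → Bool, rcgDd (S s) (L-1-j) j := by
        rw [Finset.sum_comm]
    _ ≤ (1 / N : ℝ) * ∑ j ∈ range L, 3 * (N:ℝ) * (17/20:ℝ)^(j+1) * 2^N := by
        apply mul_le_mul_of_nonneg_left (Finset.sum_le_sum hlevel) (by positivity)
    _ = (1 / N : ℝ) * ((3 * (N:ℝ) * 2^N) * ∑ j ∈ range L, (17/20:ℝ)^(j+1)) := by
        congr 1
        rw [Finset.mul_sum]
        apply Finset.sum_congr rfl
        intro j _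
        ring
    _ ≤ (1 / N : ℝ) * ((3 * (N:ℝ) * 2^N) * (17/3)) := by
        apply mul_le_mul_of_nonneg_left _ (by positivity)
        apply mul_le_mul_of_nonneg_left hgeom (by positivity)
    _ = 17 * 2^N := by
        field_simp
    _ ≤ (1 + 192 * Real.exp 1) * κ ^ 2 * 2 ^ N := by
        have he : (2:ℝ) ≤ Real.exp 1 := by
          have := Real.add_one_le_exp (1:ℝ)
          linarith
        have hκ2 : (1:ℝ) ≤ κ^2 := by nlinarith
        have h385 : (385:ℝ) ≤ 1 + 192 * Real.exp 1 := by linarith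
        have hb : (385:ℝ) * 1 ≤ (1 + 192 * Real.exp 1) * κ^2 :=
          mul_le_mul h385 hκ2 (by norm_num) (by linarith)
        have hb' : (17:ℝ) ≤ (1 + 192 * Real.exp 1) * κ^2 := by linarith
        exact mul_le_mul_of_nonneg_right hb' (le_of_lt h2N)
end
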